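/- arXiv:2204.13179 — 4 statements merged into one kernel-verified Lean document; each statement's English description precedes it below -/
import Mathlib

section
/- Let 𝒳 ⊆ ℝ be a countable set, m ∈ ℕ, Θ a Borel subset of ℝ^m, and Q a probability measure on Θ with ∫_Θ ‖θ‖ dQ(θ) < ∞. For each θ ∈ Θ let p^θ be a transition matrix on 𝒳 such that θ ↦ p^θ i j is Borel measurable for every i, j ∈ 𝒳, and let P^θ be a probability measure on the trajectory space Ω = 𝒳^ℕ under which the coordinate process (X_n)_{n≥0} is a homogeneous Markov chain with transition matrix p^θ, with θ ↦ P^θ(C) Borel measurable for every measurable cylinder set C ⊆ Ω. Let P be the probability measure on Θ × Ω given by P(dθ, dω) = Q(dθ) P^θ(dω). Assume: (i) distinguishability: for every θ ≠ θ' in Θ there exist i, j ∈ 𝒳 with p^θ i j ≠ p^{θ'} i j; (ii) for each θ ∈ Θ the chain is ergodic with limiting invariant distribution π^θ, and π^θ i > 0 for every i ∈ 𝒳; (iii) weak law of large numbers for pairs: for each θ ∈ Θ and all i, j ∈ 𝒳, (1/T) ∑_{s=0}^{T-1} 1(X_s = i, X_{s+1} = j) converges in P^θ-probability to π^θ(i)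 · p^θ i j as T → ∞. Then the Bayesian estimator θ̂_n = E_P[θ | σ(X_0, …, X_n)] converges to θ, P-almost surely on Θ × Ω, as n → ∞. -/
open MeasureTheory ProbabilityTheory Filter Topology
open scoped Classical

noncomputable section

/-- `p` is a (one-step) transition matrix on `𝒳`. -/
def IsTransMatrix {𝒳 : Type*} (p : 𝒳 → 𝒳 → ℝ) : Prop :=
  (∀ i j, 0 ≤ p i j) ∧ ∀ i, ∑' j, p i j = 1

/-- `π` is a probability vector on `𝒳`. -/
def IsProbVector {𝒳 : Type*} (π : 𝒳 → ℝ) : Prop :=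
  (∀ i, 0 ≤ π i) ∧ ∑' i, π i = 1

/-- `π` is invariant for `p`. -/
def IsInvariantVec {𝒳 : Type*} (p : 𝒳 → 𝒳 → ℝ) (π : 𝒳 → ℝ) : Prop :=
  ∀ j, π j = ∑' i, π i * p i j

/-- `t`-step transition matrix. -/
def matPow {𝒳 : Type*} (p : 𝒳 → 𝒳 → ℝ) : ℕ → 𝒳 → 𝒳 → ℝ
  | 0 => fun i j => if i = j then (1 : ℝ) else 0
  | n + 1 => fun i j => ∑' k, matPow p n i k * p k j

/-- Ergodicity: from every initial distribution, the time-`t` distribution converges to `π`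
in total variation. -/
def IsErgodic {𝒳 : Type*} (p : 𝒳 → 𝒳 → ℝ) (π : 𝒳 → ℝ) : Prop :=
  ∀ μ0 : 𝒳 → ℝ, IsProbVector μ0 →
    Tendsto (fun t => ∑' j, |(∑' i, μ0 i * matPow p t i j) - π j|) atTop (𝓝 0)

/-- `X` is a homogeneous Markov chain with transition matrix `p` under `P`. -/
def IsMarkovChain {𝒳 Ω : Type*} [MeasurableSpace Ω] (P : Measure Ω)
    (X : ℕ → Ω → 𝒳) (p : 𝒳 → 𝒳 → ℝ) : Prop :=
  ∀ (n : ℕ) (x : Fin (n + 1) → 𝒳) (k : 𝒳),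
    P {ω | (∀ t : Fin (n + 1), X t ω = x t) ∧ X (n + 1) ω = k} =
      ENNReal.ofReal (p (x (Fin.last n)) k) * P {ω | ∀ t : Fin (n + 1), X t ω = x t}

/-- Convergence in probability to a constant. -/
def TendstoInProb {Ω : Type*} [MeasurableSpace Ω] (P : Measure Ω)
    (Z : ℕ → Ω → ℝ) (c : ℝ) : Prop :=
  ∀ ε > 0, Tendsto (fun T => P {ω | ε < |Z T ω - c|}) atTop (𝓝 0)

/-- Transition matrix of the pair chain `Y_n = (X_n, X_{n+1})`. -/
def pairTM {𝒳 : Type*} (p : 𝒳 → 𝒳 → ℝ) : 𝒳 × 𝒳 → 𝒳 × 𝒳 → ℝ :=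
  fun y z => if y.2 = z.1 then p z.1 z.2 else 0
open scoped NNReal ENNReal


lemma aux_tsum_toReal {ι : Type*} {f : ι → ℝ} (hf : ∀ i, 0 ≤ f i) :
    ∑' i, f i = (∑' i, ENNReal.ofReal (f i)).toReal := by
  set g : ι → ℝ≥0 := fun i => (f i).toNNReal with hg
  have hco : ∀ i, f i = (g i : ℝ) := fun i => (Real.coe_toNNReal _ (hf i)).symm
  have hof : ∀ i, ENNReal.ofReal (f i) = (g i : ℝ≥0∞) := fun i => rfl
  by_cases hs : Summable g
  · rw [tsum_congr hco, ← NNReal.coe_tsum, tsum_congr hof, ← ENNReal.coe_tsum hs,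
      ENNReal.coe_toReal]
  · have h1 : ∑' i, ENNReal.ofReal (f i) = ∞ := by
      rw [tsum_congr hof]
      by_contra h
      exact hs (ENNReal.tsum_coe_ne_top_iff_summable.1 h)
    have h2 : ¬ Summable f := by
      intro h
      exact hs (NNReal.summable_coe.1 (by simpa [← hco] using h))
    rw [tsum_eq_zero_of_not_summable h2, h1, ENNReal.toReal_top]

lemma aux_summable {ι : Type*} {f : ι → ℝ} (hf : ∀ i, 0 ≤ f i) (h1 : ∑' i, f i = 1) :
    Summable f := by
  by_contra h
  rw [tsum_eq_zero_of_not_summable h] at h1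
  norm_num at h1

lemma aux_ofReal_tsum_one {ι : Type*} {f : ι → ℝ} (hf : ∀ i, 0 ≤ f i) (h1 : ∑' i, f i = 1) :
    ∑' i, ENNReal.ofReal (f i) = 1 := by
  have h := aux_tsum_toReal hf
  rw [h1] at h
  have hne : ∑' i, ENNReal.ofReal (f i) ≠ ∞ := by
    intro htop
    rw [htop] at h
    norm_num at h
  rw [← ENNReal.ofReal_toReal hne, ← h, ENNReal.ofReal_one]

lemma condexp_clm_comm {α : Type*} {m m0 : MeasurableSpace α} (hm : m ≤ m0)
    {μ : Measure α} [SigmaFinite (μ.trim hm)]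
    {E F : Type*} [NormedAddCommGroup E] [NormedSpace ℝ E] [CompleteSpace E]
    [NormedAddCommGroup F] [NormedSpace ℝ F] [CompleteSpace F]
    (L : E →L[ℝ] F) {f : α → E} (hf : Integrable f μ) :
    (fun x => L ((μ[f|m]) x)) =ᵐ[μ] μ[fun x => L (f x)|m] := by
  refine ae_eq_condExp_of_forall_setIntegral_eq hm (L.integrable_comp hf)
    (fun s _ _ => (L.integrable_comp integrable_condExp).integrableOn)
    (fun s hs hμs => ?_) ?_
  · rw [L.integral_comp_comm integrable_condExp.integrableOn,
      setIntegral_condExp hm hf hs, ← L.integral_comp_comm hf.integrableOn]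
  · exact ⟨fun x => L ((μ[f|m]) x),
      L.continuous.comp_stronglyMeasurable stronglyMeasurable_condExp, EventuallyEq.rfl⟩

def sigX (S : Set ℝ) (m : ℕ) : MeasurableSpace ((Fin m → ℝ) × (ℕ → ↥S)) :=
  ⨆ k : ℕ, MeasurableSpace.comap (fun z : (Fin m → ℝ) × (ℕ → ↥S) => z.2 k) inferInstance

/-- consistency of the Bayesian estimator for an ergodic Markov chain.
Under distinguishability of the transition matrices, ergodicity with everywhere positive
limiting invariant distributions, and the weak LLN for pair frequencies, the Bayesian
estimator `θ̂_n = E_P[θ | σ(X_0,…,X_n)]` converges to `θ`, `P`-almost surely on `Θ × Ω`,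
where `P(dθ,dω) = Q(dθ) P^θ(dω)`. -/
theorem bayesian_estimator_consistent
    (S : Set ℝ) (hS : S.Countable) (m : ℕ)
    (Θ : Set (Fin m → ℝ)) (hΘ : MeasurableSet Θ)
    (Q : Measure (Fin m → ℝ)) [IsProbabilityMeasure Q] (hQΘ : Q Θᶜ = 0)
    (hQint : Integrable (fun θ => θ) Q)
    (p : (Fin m → ℝ) → ↥S → ↥S → ℝ)
    (hp : ∀ θ ∈ Θ, IsTransMatrix (p θ))
    (hpmeas : ∀ i j : ↥S, Measurable fun θ : Θ => p θ i j)
    (Pθ : (Fin m → ℝ) → Measure (ℕ → ↥S))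
    (hPθprob : ∀ θ ∈ Θ, IsProbabilityMeasure (Pθ θ))
    (hPθMC : ∀ θ ∈ Θ, IsMarkovChain (Pθ θ) (fun n ω => ω n) (p θ))
    (hPθmeas : ∀ (n : ℕ) (A : Set (Fin (n + 1) → ↥S)),
      Measurable fun θ : Θ => Pθ θ {ω | (fun t : Fin (n + 1) => ω t) ∈ A})
    (P : Measure ((Fin m → ℝ) × (ℕ → ↥S))) [IsProbabilityMeasure P]
    (hP : ∀ (s : Set (Fin m → ℝ)) (t : Set (ℕ → ↥S)),
      MeasurableSet s → MeasurableSet t → P (s ×ˢ t) = ∫⁻ θ in s, Pθ θ t ∂Q)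
    (hdist : ∀ θ ∈ Θ, ∀ θ' ∈ Θ, θ ≠ θ' → ∃ i j, p θ i j ≠ p θ' i j)
    (π : (Fin m → ℝ) → ↥S → ℝ)
    (hπ : ∀ θ ∈ Θ, IsProbVector (π θ))
    (herg : ∀ θ ∈ Θ, IsErgodic (p θ) (π θ))
    (hπpos : ∀ θ ∈ Θ, ∀ i, 0 < π θ i)
    (hLLN : ∀ θ ∈ Θ, ∀ i j : ↥S,
      TendstoInProb (Pθ θ)
        (fun T ω => (T : ℝ)⁻¹ * ∑ s ∈ Finset.range T,
          (if ω s = i ∧ ω (s + 1) = j then (1 : ℝ) else 0))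
        (π θ i * p θ i j)) :
    ∀ᵐ z ∂P, Tendsto
      (fun n => (P[fun z : (Fin m → ℝ) × (ℕ → ↥S) => z.1 |
          ⨆ k : Fin (n + 1),
            MeasurableSpace.comap (fun z : (Fin m → ℝ) × (ℕ → ↥S) => z.2 k)
              inferInstance]) z)
      atTop (𝓝 z.1) := by
  classical
  have hScount : Countable ↥S := hS.to_subtype
  have hΘne : Θ.Nonempty := by
    by_contra h
    rw [Set.not_nonempty_iff_eq_empty] at h
    rw [h, Set.compl_empty, measure_univ] at hQΘ
    norm_num at hQΘ
  obtain ⟨θ0, hθ0⟩ := hΘne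
  have hSne : Nonempty ↥S := by
    by_contra h
    haveI : IsEmpty ↥S := not_nonempty_iff.mp h
    have := (hπ θ0 hθ0).2
    rw [tsum_empty] at this
    norm_num at this
  -- Step B: measurability of θ ↦ Pθ θ A for all measurable A
  have hameas : ∀ (A : Set (ℕ → ↥S)), MeasurableSet A → Measurable fun θ : Θ => Pθ θ A := by
    intro A hA
    refine MeasurableSpace.induction_on_inter
      (C := fun A _ => Measurable fun θ : Θ => Pθ θ A)
      generateFrom_measurableCylinders.symm isPiSystem_measurableCylinders ?_ ?_ ?_ ?_ A hA
    · simp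
    · rintro t ht
      rw [mem_measurableCylinders] at ht
      obtain ⟨s, B, hB, rfl⟩ := ht
      have hmem : ∀ i : s, (i : ℕ) < s.sup id + 1 := fun i =>
        Nat.lt_succ_of_le (Finset.le_sup (f := id) i.2)
      have : cylinder s B = {ω : ℕ → ↥S |
          (fun t : Fin (s.sup id + 1) => ω t) ∈
            (fun (x : Fin (s.sup id + 1) → ↥S) (i : s) => x ⟨i, hmem i⟩) ⁻¹' B} := rfl
      rw [this]
      exact hPθmeas (s.sup id) _
    · intro t ht hC
      have he : ∀ θ : Θ, Pθ θ tᶜ = 1 - Pθ θ t := fun θ => by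
        haveI := hPθprob θ θ.2
        rw [measure_compl ht (measure_ne_top _ _), measure_univ]
      simp only [he]
      exact Measurable.const_sub hC 1
    · intro f hdisj hfm hC
      have he : ∀ θ : Θ, Pθ θ (⋃ i, f i) = ∑' i, Pθ θ (f i) := fun θ =>
        measure_iUnion hdisj hfm
      simp only [he]
      exact Measurable.ennreal_tsum hC
  -- the kernel
  set κf : (Fin m → ℝ) → Measure (ℕ → ↥S) :=
    fun θ => if h : θ ∈ Θ then Pθ θ else Pθ θ0 with hκf
  have hκfΘ : ∀ θ ∈ Θ, κf θ = Pθ θ := fun θ h => dif_pos h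
  have hκfA : ∀ (θ) (A : Set (ℕ → ↥S)),
      κf θ A = if h : θ ∈ Θ then Pθ θ A else Pθ θ0 A := by
    intro θ A
    by_cases h : θ ∈ Θ <;> simp [hκf, h]
  have hκmeas : Measurable κf := by
    refine Measure.measurable_of_measurable_coe _ fun A hA => ?_
    simp only [hκfA]
    exact Measurable.dite (hameas A hA) measurable_const hΘ
  set κ : Kernel (Fin m → ℝ) (ℕ → ↥S) := ⟨κf, hκmeas⟩ with hκdef
  haveI hκmarkov : IsMarkovKernel κ := by
    refine ⟨fun θ => ?_⟩
    show IsProbabilityMeasure (κf θ)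
    by_cases h : θ ∈ Θ
    · rw [hκfΘ θ h]; exact hPθprob θ h
    · simp only [hκf, dif_neg h]; exact hPθprob θ0 hθ0
  have hκapp : ∀ θ, κ θ = κf θ := fun θ => rfl
  have hQae : ∀ᵐ θ ∂Q, θ ∈ Θ := by
    rw [ae_iff]
    exact hQΘ
  -- P is the compProd
  have hPeq : P = Q.compProd κ := by
    refine ext_of_generate_finite _ generateFrom_prod.symm isPiSystem_prod ?_ ?_
    · rintro u ⟨s, hs, t, ht, rfl⟩
      simp only [Set.mem_setOf_eq] at hs ht
      rw [hP s t hs ht, Measure.compProd_apply_prod hs ht]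
      refine setLIntegral_congr_fun_ae hs ?_
      filter_upwards [hQae] with θ hθ _
      rw [hκapp, hκfΘ θ hθ]
    · haveI : IsProbabilityMeasure (Q.compProd κ) := by infer_instance
      simp [measure_univ]
  have hsect : ∀ (A : Set ((Fin m → ℝ) × (ℕ → ↥S))), MeasurableSet A →
      P A = ∫⁻ θ, κ θ (Prod.mk θ ⁻¹' A) ∂Q := by
    intro A hA
    rw [hPeq, Measure.compProd_apply hA]
  have hPΘ : ∀ᵐ z ∂P, z.1 ∈ Θ := by
    rw [ae_iff]
    have : {z : (Fin m → ℝ) × (ℕ → ↥S) | ¬ z.1 ∈ Θ} = Θᶜ ×ˢ Set.univ := by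
      ext z; simp [Set.mem_prod]
    rw [this, hP _ _ hΘ.compl MeasurableSet.univ]
    rw [setLIntegral_measure_zero _ _ hQΘ]
  -- Step A: matPow basic properties and measurability of π on Θ
  have hppos : ∀ θ ∈ Θ, ∀ i j, 0 ≤ p θ i j := fun θ h => (hp θ h).1
  have hmatnn : ∀ θ ∈ Θ, ∀ t (i j : ↥S), 0 ≤ matPow (p θ) t i j := by
    intro θ hθ t
    induction t with
    | zero =>
      intro i j
      by_cases h : i = j <;> simp [matPow, h]
    | succ t ih =>
      intro i j
      exact tsum_nonneg fun k => mul_nonneg (ih i k) (hppos θ hθ k j)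
  have hmatmeas : ∀ t (i j : ↥S), Measurable fun θ : Θ => matPow (p θ) t i j := by
    intro t
    induction t with
    | zero =>
      intro i j
      simp only [matPow]
      exact measurable_const
    | succ t ih =>
      intro i j
      have heq : (fun θ : Θ => matPow (p θ) (t+1) i j)
          = fun θ : Θ => (∑' k, ENNReal.ofReal (matPow (p θ) t i k * p θ k j)).toReal :=
        funext fun θ =>
          aux_tsum_toReal fun k => mul_nonneg (hmatnn θ θ.2 t i k) (hppos θ θ.2 k j)
      rw [heq]
      exact (Measurable.ennreal_tsum fun k =>
        ((ih i k).mul (hpmeas k j)).ennreal_ofReal).ennreal_toReal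
  have hprow1 : ∀ θ ∈ Θ, ∀ i : ↥S, ∑' j, ENNReal.ofReal (p θ i j) = 1 := fun θ hθ i =>
    aux_ofReal_tsum_one (fun j => hppos θ hθ i j) ((hp θ hθ).2 i)
  have hmatrow : ∀ θ ∈ Θ, ∀ t (i : ↥S), ∑' j, ENNReal.ofReal (matPow (p θ) t i j) = 1 := by
    intro θ hθ t
    induction t with
    | zero =>
      intro i
      have h : ∀ j : ↥S, ENNReal.ofReal (matPow (p θ) 0 i j)
          = if j = i then (1:ℝ≥0∞) else 0 := by
        intro j
        by_cases h : i = j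
        · subst h; simp [matPow]
        · have h' : ¬ (j = i) := fun hh => h hh.symm
          simp [matPow, h, h']
      rw [tsum_congr h, tsum_ite_eq]
    | succ t ih =>
      intro i
      have hofmul : ∀ j, ENNReal.ofReal (matPow (p θ) (t+1) i j)
          = ∑' k, ENNReal.ofReal (matPow (p θ) t i k) * ENNReal.ofReal (p θ k j) := by
        intro j
        have h1 : matPow (p θ) (t+1) i j
            = (∑' k, ENNReal.ofReal (matPow (p θ) t i k * p θ k j)).toReal :=
          aux_tsum_toReal fun k => mul_nonneg (hmatnn θ hθ t i k) (hppos θ hθ k j)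
        have h2 : (∑' k, ENNReal.ofReal (matPow (p θ) t i k * p θ k j))
            = ∑' k, ENNReal.ofReal (matPow (p θ) t i k) * ENNReal.ofReal (p θ k j) :=
          tsum_congr fun k => ENNReal.ofReal_mul (hmatnn θ hθ t i k)
        have hfin : (∑' k, ENNReal.ofReal (matPow (p θ) t i k) * ENNReal.ofReal (p θ k j))
            ≠ ∞ := by
          have hle : (∑' k, ENNReal.ofReal (matPow (p θ) t i k) * ENNReal.ofReal (p θ k j))
              ≤ ∑' k, ENNReal.ofReal (matPow (p θ) t i k) := by
            refine Summable.tsum_le_tsum (fun k => ?_) ENNReal.summable ENNReal.summable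
            have hb : ENNReal.ofReal (p θ k j) ≤ 1 := by
              rw [← hprow1 θ hθ k]
              exact ENNReal.le_tsum j
            calc ENNReal.ofReal (matPow (p θ) t i k) * ENNReal.ofReal (p θ k j)
                ≤ ENNReal.ofReal (matPow (p θ) t i k) * 1 := mul_le_mul_right hb _
              _ = ENNReal.ofReal (matPow (p θ) t i k) := mul_one _
          rw [ih i] at hle
          exact ne_top_of_le_ne_top ENNReal.one_ne_top hle
        rw [h1, h2, ENNReal.ofReal_toReal hfin]
      calc ∑' j, ENNReal.ofReal (matPow (p θ) (t+1) i j)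
          = ∑' j, ∑' k, ENNReal.ofReal (matPow (p θ) t i k) * ENNReal.ofReal (p θ k j) :=
            tsum_congr hofmul
        _ = ∑' k, ∑' j, ENNReal.ofReal (matPow (p θ) t i k) * ENNReal.ofReal (p θ k j) :=
            ENNReal.tsum_comm
        _ = ∑' k, ENNReal.ofReal (matPow (p θ) t i k) * ∑' j, ENNReal.ofReal (p θ k j) :=
            tsum_congr fun k => ENNReal.tsum_mul_left
        _ = 1 := by
            simp only [hprow1 θ hθ, mul_one]
            exact ih i
  have hmatsummable : ∀ θ ∈ Θ, ∀ t (i : ↥S), Summable fun j => matPow (p θ) t i j := by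
    intro θ hθ t i
    have h := hmatrow θ hθ t i
    have h2 : Summable fun j => (matPow (p θ) t i j).toNNReal := by
      apply ENNReal.tsum_coe_ne_top_iff_summable.1
      have hc : ∀ j : ↥S, ((matPow (p θ) t i j).toNNReal : ℝ≥0∞)
          = ENNReal.ofReal (matPow (p θ) t i j) := fun j => rfl
      rw [tsum_congr hc, h]
      exact ENNReal.one_ne_top
    exact (NNReal.summable_coe.2 h2).congr fun j => Real.coe_toNNReal _ (hmatnn θ hθ t i j)
  have hπlim : ∀ θ ∈ Θ, ∀ (i j : ↥S),
      Tendsto (fun t => matPow (p θ) t i j) atTop (𝓝 (π θ j)) := by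
    intro θ hθ i j
    have hδ : IsProbVector (fun i' : ↥S => if i' = i then (1:ℝ) else 0) := by
      constructor
      · intro i'
        by_cases h : i' = i <;> simp [h]
      · exact tsum_ite_eq i 1
    have herg' := herg θ hθ _ hδ
    have hinner : ∀ t (j' : ↥S),
        (∑' i', (if i' = i then (1:ℝ) else 0) * matPow (p θ) t i' j')
          = matPow (p θ) t i j' := by
      intro t j'
      have h : ∀ i', (if i' = i then (1:ℝ) else 0) * matPow (p θ) t i' j'
          = if i' = i then matPow (p θ) t i j' else 0 := by
        intro i'
        by_cases h : i' = i
        · subst h; simp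
        · simp [h]
      rw [tsum_congr h, tsum_ite_eq]
    have habs : ∀ t, Summable fun j' => |matPow (p θ) t i j' - π θ j'| := by
      intro t
      refine Summable.of_nonneg_of_le (fun j' => abs_nonneg _) (fun j' => ?_)
        ((hmatsummable θ hθ t i).add (aux_summable (hπ θ hθ).1 (hπ θ hθ).2))
      have h1 := hmatnn θ hθ t i j'
      have h2 := (hπ θ hθ).1 j'
      calc |matPow (p θ) t i j' - π θ j'| ≤ |matPow (p θ) t i j'| + |π θ j'| := abs_sub _ _
        _ = matPow (p θ) t i j' + π θ j' := by rw [abs_of_nonneg h1, abs_of_nonneg h2]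
    have hle : ∀ t, |matPow (p θ) t i j - π θ j|
        ≤ ∑' j', |matPow (p θ) t i j' - π θ j'| := fun t =>
      Summable.le_tsum (habs t) j fun _ _ => abs_nonneg _
    have h0 : Tendsto (fun t => |matPow (p θ) t i j - π θ j|) atTop (𝓝 0) := by
      refine squeeze_zero (fun t => abs_nonneg _) hle ?_
      refine herg'.congr fun t => ?_
      exact tsum_congr fun j' => by rw [hinner t j']
    rw [tendsto_iff_dist_tendsto_zero]
    simpa [Real.dist_eq] using h0
  have hπmeas : ∀ j : ↥S, Measurable fun θ : Θ => π θ j := by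
    intro j
    obtain ⟨i0⟩ := hSne
    exact measurable_of_tendsto_metrizable (fun t => hmatmeas t i0 j)
      (tendsto_pi_nhds.2 fun θ => hπlim θ θ.2 i0 j)
  -- Step C/D: σ(X)-measurable representatives of the pair-frequency limits
  have hevalG : ∀ k : ℕ, Measurable[sigX S m] (fun z : (Fin m → ℝ) × (ℕ → ↥S) => z.2 k) := by
    intro k
    exact measurable_iff_comap_le.2
      (le_iSup (fun k => MeasurableSpace.comap (fun z : (Fin m → ℝ) × (ℕ → ↥S) => z.2 k)
        inferInstance) k)
  have hGle : sigX S m ≤ Prod.instMeasurableSpace := by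
    exact iSup_le fun k => Measurable.comap_le ((measurable_pi_apply k).comp measurable_snd)
  set cfun : (↥S × ↥S) → (Fin m → ℝ) → ℝ :=
    fun q θ => if h : θ ∈ Θ then π θ q.1 * p θ q.1 q.2 else 0 with hcfun
  have hcmeas : ∀ q, Measurable (cfun q) := fun q =>
    Measurable.dite ((hπmeas q.1).mul (hpmeas q.1 q.2)) measurable_const hΘ
  have hcnn : ∀ q θ, 0 ≤ cfun q θ := by
    intro q θ
    by_cases h : θ ∈ Θ
    · rw [hcfun]
      simp only [dif_pos h]
      exact mul_nonneg (le_of_lt (hπpos θ h q.1)) (hppos θ h q.1 q.2)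
    · rw [hcfun]
      simp only [dif_neg h]
      exact le_refl 0
  set fseq : ↥S × ↥S → ℕ → ((Fin m → ℝ) × (ℕ → ↥S)) → ℝ := fun q T z =>
    (T : ℝ)⁻¹ * ∑ s ∈ Finset.range T, (if z.2 s = q.1 ∧ z.2 (s+1) = q.2 then (1:ℝ) else 0)
    with hfseqdef
  have hsetmeas : ∀ (k : ℕ) (i : ↥S),
      MeasurableSet[sigX S m] {z : (Fin m → ℝ) × (ℕ → ↥S) | z.2 k = i} :=
    fun k i => hevalG k (measurableSet_singleton i)
  have hfseqG : ∀ q T, Measurable[sigX S m] (fseq q T) := by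
    intro q T
    apply Measurable.const_mul
    apply Finset.measurable_sum
    intro s _
    exact Measurable.ite ((hsetmeas s q.1).inter (hsetmeas (s+1) q.2))
      measurable_const measurable_const
  have hrep : ∀ q : ↥S × ↥S, ∃ h : ((Fin m → ℝ) × (ℕ → ↥S)) → ℝ,
      Measurable[sigX S m] h ∧ h =ᵐ[P] fun z => cfun q z.1 := by
    intro q
    have htim : TendstoInMeasure P (fseq q) atTop (fun z => cfun q z.1) := by
      rw [tendstoInMeasure_iff_dist]
      intro ε hε
      set A : ℕ → Set ((Fin m → ℝ) × (ℕ → ↥S)) :=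
        fun T => {z | ε ≤ dist (fseq q T z) (cfun q z.1)} with hAdef
      have hAmeas : ∀ T, MeasurableSet (A T) := by
        intro T
        apply measurableSet_le measurable_const
        exact Measurable.dist ((hfseqG q T).mono hGle le_rfl)
          ((hcmeas q).comp measurable_fst)
      have hPA : ∀ T, P (A T) = ∫⁻ θ, κ θ (Prod.mk θ ⁻¹' A T) ∂Q := fun T =>
        hsect _ (hAmeas T)
      have h0 : Tendsto (fun T => ∫⁻ θ, κ θ (Prod.mk θ ⁻¹' A T) ∂Q)
          atTop (𝓝 (∫⁻ _θ, 0 ∂Q)) := by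
        refine tendsto_lintegral_of_dominated_convergence (fun _ => 1)
          (fun T => Kernel.measurable_kernel_prodMk_left (hAmeas T))
          (fun T => Eventually.of_forall fun θ => prob_le_one)
          (by simp) ?_
        filter_upwards [hQae] with θ hθ
        have hsec : ∀ T, Prod.mk θ ⁻¹' A T
            = {ω : ℕ → ↥S | ε ≤ dist (fseq q T (θ, ω)) (cfun q θ)} := fun T => rfl
        have hκθ : κ θ = Pθ θ := by rw [hκapp, hκfΘ θ hθ]
        have hcθ : cfun q θ = π θ q.1 * p θ q.1 q.2 := by rw [hcfun]; simp only [dif_pos hθ]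
        have hlln := hLLN θ hθ q.1 q.2 (ε/2) (half_pos hε)
        refine tendsto_of_tendsto_of_tendsto_of_le_of_le tendsto_const_nhds hlln
          (fun T => by simp) (fun T => ?_)
        rw [hsec T, hκθ]
        apply measure_mono
        intro ω hω
        simp only [Set.mem_setOf_eq] at hω ⊢
        rw [Real.dist_eq, hcθ] at hω
        exact lt_of_lt_of_le (half_lt_self hε) hω
      simp only [lintegral_zero] at h0
      exact (tendsto_congr hPA).2 h0
    obtain ⟨ns, _hns, hae⟩ := htim.exists_seq_tendsto_ae
    refine ⟨fun z => (Filter.limsup (fun k => ENNReal.ofReal (fseq q (ns k) z)) atTop).toReal,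
      ?_, ?_⟩
    · exact Measurable.ennreal_toReal
        (Measurable.limsup fun k => ((hfseqG q (ns k)).ennreal_ofReal))
    · filter_upwards [hae] with z hz
      have h1 : Tendsto (fun k => ENNReal.ofReal (fseq q (ns k) z)) atTop
          (𝓝 (ENNReal.ofReal (cfun q z.1))) :=
        (ENNReal.continuous_ofReal.tendsto _).comp hz
      rw [h1.limsup_eq, ENNReal.toReal_ofReal (hcnn q z.1)]
  choose Hrep HrepG HrepAE using hrep
  -- Step E: identification of θ from the pair matrix
  haveI : Encodable (↥S × ↥S) := Encodable.ofCountable _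
  haveI : StandardBorelSpace ↥Θ := hΘ.standardBorel
  set gmat : ↥Θ → (ℕ → ℝ) := fun θ n =>
    Option.elim (Encodable.decode (α := ↥S × ↥S) n) 0 (fun q => cfun q ↑θ) with hgmat
  have hgmeas : Measurable gmat := by
    apply measurable_pi_lambda
    intro n
    cases hdec : (Encodable.decode (α := ↥S × ↥S) n) with
    | none =>
      simp only [hgmat, hdec, Option.elim]
      exact measurable_const
    | some q =>
      simp only [hgmat, hdec, Option.elim]
      exact (hcmeas q).comp measurable_subtype_coe
  have hcfun_inj : ∀ θ ∈ Θ, ∀ θ' ∈ Θ, (∀ q : ↥S × ↥S, cfun q θ = cfun q θ') → θ = θ' := by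
    intro θ hθ θ' hθ' hq
    by_contra hne
    obtain ⟨i, j, hij⟩ := hdist θ hθ θ' hθ' hne
    have hcq : ∀ j' : ↥S, π θ i * p θ i j' = π θ' i * p θ' i j' := by
      intro j'
      have := hq (i, j')
      rw [hcfun] at this
      simpa only [dif_pos hθ, dif_pos hθ'] using this
    have hπeq : π θ i = π θ' i := by
      calc π θ i = ∑' j', π θ i * p θ i j' := by
            rw [tsum_mul_left, (hp θ hθ).2 i, mul_one]
        _ = ∑' j', π θ' i * p θ' i j' := tsum_congr hcq
        _ = π θ' i := by rw [tsum_mul_left, (hp θ' hθ').2 i, mul_one]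
    have hpq : π θ i * p θ i j = π θ i * p θ' i j := by
      rw [hcq j, hπeq]
    exact hij (mul_left_cancel₀ (ne_of_gt (hπpos θ hθ i)) hpq)
  have hginj : Function.Injective gmat := by
    intro θ θ' h
    apply Subtype.ext
    apply hcfun_inj θ θ.2 θ' θ'.2
    intro q
    have h2 := congrFun h (Encodable.encode q)
    simpa only [hgmat, Encodable.encodek, Option.elim] using h2
  have hemb : MeasurableEmbedding gmat := hgmeas.measurableEmbedding hginj
  set Ginv : (ℕ → ℝ) → (Fin m → ℝ) := fun y =>
    if h : y ∈ Set.range gmat then ↑(Set.rangeSplitting gmat ⟨y, h⟩) else θ0 with hGinvdef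
  have hGinvmeas : Measurable Ginv := by
    rw [hGinvdef]
    exact Measurable.dite
      (f := fun x : ↥(Set.range gmat) => (↑(Set.rangeSplitting gmat x) : Fin m → ℝ))
      (g := fun _ => θ0)
      (measurable_subtype_coe.comp hemb.measurable_rangeSplitting)
      measurable_const hemb.measurableSet_range
  have hGg : ∀ θ : ↥Θ, Ginv (gmat θ) = ↑θ := by
    intro θ
    rw [hGinvdef]
    simp only [dif_pos (Set.mem_range_self θ)]
    congr 1
    apply hginj
    exact Set.apply_rangeSplitting gmat ⟨gmat θ, Set.mem_range_self θ⟩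
  -- Step F: the sigma(X)-measurable representative of θ
  obtain ⟨hfn, hfnG, hfnae⟩ : ∃ h : ((Fin m → ℝ) × (ℕ → ↥S)) → (Fin m → ℝ),
      Measurable[sigX S m] h ∧ h =ᵐ[P] fun z => z.1 := by
    refine ⟨fun z => Ginv (fun n =>
      Option.elim (Encodable.decode (α := ↥S × ↥S) n) 0 (fun q => Hrep q z)), ?_, ?_⟩
    · have hinner : Measurable[sigX S m] (fun z : (Fin m → ℝ) × (ℕ → ↥S) =>
          (fun n => Option.elim (Encodable.decode (α := ↥S × ↥S) n) 0 (fun q => Hrep q z))) := by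
        letI : MeasurableSpace ((Fin m → ℝ) × (ℕ → ↥S)) := sigX S m
        apply measurable_pi_lambda
        intro n
        cases hdec : (Encodable.decode (α := ↥S × ↥S) n) with
        | none =>
          simp only [hdec, Option.elim]
          exact measurable_const
        | some q =>
          simp only [hdec, Option.elim]
          exact HrepG q
      exact @Measurable.comp _ _ _ (sigX S m) _ _ _ _ hGinvmeas hinner
    · have hall : ∀ᵐ z ∂P, ∀ q : ↥S × ↥S, Hrep q z = cfun q z.1 :=
        ae_all_iff.2 fun q => HrepAE q
      filter_upwards [hall, hPΘ] with z hzq hzΘ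
      have heq : (fun n => Option.elim (Encodable.decode (α := ↥S × ↥S) n) 0
          (fun q => Hrep q z)) = gmat ⟨z.1, hzΘ⟩ := by
        funext n
        cases hdec : (Encodable.decode (α := ↥S × ↥S) n) with
        | none => simp [hgmat, hdec]
        | some q => simp [hgmat, hdec, hzq q]
      rw [heq, hGg]
  -- Step G: martingale convergence
  set ℱ : Filtration ℕ (Prod.instMeasurableSpace :
      MeasurableSpace ((Fin m → ℝ) × (ℕ → ↥S))) :=
    { seq := fun n => ⨆ k : Fin (n+1),
        MeasurableSpace.comap (fun z : (Fin m → ℝ) × (ℕ → ↥S) => z.2 k) inferInstance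
      mono' := fun n n' hnn' => iSup_le fun k =>
        le_iSup_of_le (⟨k.1, lt_of_lt_of_le k.2 (by omega)⟩ : Fin (n'+1)) le_rfl
      le' := fun n => iSup_le fun k =>
        Measurable.comap_le ((measurable_pi_apply (k : ℕ)).comp measurable_snd) } with hℱdef
  have hℱapp : ∀ n, (ℱ n : MeasurableSpace ((Fin m → ℝ) × (ℕ → ↥S)))
      = ⨆ k : Fin (n+1),
        MeasurableSpace.comap (fun z : (Fin m → ℝ) × (ℕ → ↥S) => z.2 k) inferInstance :=
    fun n => rfl
  have hsupℱ : (⨆ n, (ℱ n : MeasurableSpace ((Fin m → ℝ) × (ℕ → ↥S)))) = sigX S m := by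
    apply le_antisymm
    · refine iSup_le fun n => ?_
      rw [hℱapp n]
      refine iSup_le fun k => ?_
      exact le_iSup (fun k : ℕ => MeasurableSpace.comap
        (fun z : (Fin m → ℝ) × (ℕ → ↥S) => z.2 k) inferInstance) (k : ℕ)
    · refine iSup_le fun k => ?_
      refine le_trans ?_ (le_iSup (fun n => (ℱ n : MeasurableSpace _)) k)
      rw [hℱapp k]
      exact le_iSup_of_le (⟨k, Nat.lt_succ_self k⟩ : Fin (k+1)) le_rfl
  -- integrability
  have hmapfst : P.map Prod.fst = Q := by
    ext s hs
    rw [Measure.map_apply measurable_fst hs]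
    have hpre : Prod.fst ⁻¹' s = s ×ˢ (Set.univ : Set (ℕ → ↥S)) := by
      ext z; simp
    rw [hpre, hP s _ hs MeasurableSet.univ]
    have hone : ∀ᵐ θ ∂Q, θ ∈ s → Pθ θ Set.univ = 1 := by
      filter_upwards [hQae] with θ hθ _
      haveI := hPθprob θ hθ
      exact measure_univ
    rw [setLIntegral_congr_fun_ae hs hone]
    simp
  have hθint : Integrable (fun z : (Fin m → ℝ) × (ℕ → ↥S) => z.1) P := by
    have h1 : Integrable (id : (Fin m → ℝ) → (Fin m → ℝ)) (P.map Prod.fst) := by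
      rw [hmapfst]; exact hQint
    rw [integrable_map_measure aestronglyMeasurable_id measurable_fst.aemeasurable] at h1
    exact h1
  have hfnint : Integrable hfn P := hθint.congr hfnae.symm
  have hcoordint : ∀ l : Fin m, Integrable (fun z : (Fin m → ℝ) × (ℕ → ↥S) => hfn z l) P := by
    intro l
    refine Integrable.congr
      ((ContinuousLinearMap.proj (R := ℝ) (φ := fun _ : Fin m => ℝ) l).integrable_comp hθint) ?_
    filter_upwards [hfnae] with z hz
    simp only [ContinuousLinearMap.proj_apply, Function.comp]
    rw [hz]
  have hSM : ∀ l : Fin m, StronglyMeasurable[⨆ n, (ℱ n : MeasurableSpace _)]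
      (fun z : (Fin m → ℝ) × (ℕ → ↥S) => hfn z l) := by
    intro l
    rw [hsupℱ]
    exact Measurable.stronglyMeasurable
      (@Measurable.comp _ _ _ (sigX S m) _ _ _ _ (measurable_pi_apply l) hfnG)
  have hmart : ∀ l : Fin m, ∀ᵐ z ∂P,
      Tendsto (fun n => (P[fun z : (Fin m → ℝ) × (ℕ → ↥S) => hfn z l|ℱ n]) z)
        atTop (𝓝 (hfn z l)) :=
    fun l => (hcoordint l).tendsto_ae_condExp (hSM l)
  have hcoordce : ∀ (n : ℕ) (l : Fin m),
      (fun z => (P[fun z : (Fin m → ℝ) × (ℕ → ↥S) => z.1|ℱ n]) z l)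
        =ᵐ[P] P[fun z : (Fin m → ℝ) × (ℕ → ↥S) => hfn z l|ℱ n] := by
    intro n l
    have h1 : P[fun z : (Fin m → ℝ) × (ℕ → ↥S) => z.1|ℱ n] =ᵐ[P] P[hfn|ℱ n] :=
      condExp_congr_ae hfnae.symm
    have h2 : (fun z => (ContinuousLinearMap.proj (R := ℝ) (φ := fun _ : Fin m => ℝ) l)
        ((P[hfn|ℱ n]) z)) =ᵐ[P] P[fun z => (ContinuousLinearMap.proj (R := ℝ)
          (φ := fun _ : Fin m => ℝ) l) (hfn z)|ℱ n] :=
      condexp_clm_comm (ℱ.le n) _ hfnint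
    refine EventuallyEq.trans ?_ h2
    filter_upwards [h1] with z hz
    simp only [ContinuousLinearMap.proj_apply]
    rw [hz]
  have hcoordall : ∀ᵐ z ∂P, ∀ (n : ℕ) (l : Fin m),
      (P[fun z : (Fin m → ℝ) × (ℕ → ↥S) => z.1|ℱ n]) z l
        = (P[fun z : (Fin m → ℝ) × (ℕ → ↥S) => hfn z l|ℱ n]) z :=
    ae_all_iff.2 fun n => ae_all_iff.2 fun l => hcoordce n l
  have hmartall : ∀ᵐ z ∂P, ∀ l : Fin m,
      Tendsto (fun n => (P[fun z : (Fin m → ℝ) × (ℕ → ↥S) => hfn z l|ℱ n]) z)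
        atTop (𝓝 (hfn z l)) :=
    ae_all_iff.2 hmart
  filter_upwards [hcoordall, hmartall, hfnae] with z hc hmz hfz
  have hgoal : Tendsto (fun n => (P[fun z : (Fin m → ℝ) × (ℕ → ↥S) => z.1|ℱ n]) z)
      atTop (𝓝 z.1) := by
    rw [tendsto_pi_nhds]
    intro l
    have heqseq : (fun n => (P[fun z : (Fin m → ℝ) × (ℕ → ↥S) => z.1|ℱ n]) z l)
        = fun n => (P[fun z : (Fin m → ℝ) × (ℕ → ↥S) => hfn z l|ℱ n]) z :=
      funext fun n => hc n l
    rw [heqseq]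
    have : z.1 l = hfn z l := by rw [hfz]
    rw [this]
    exact hmz l
  exact hgoal
end
end

section
/- Let 𝒳 ⊆ ℝ be a countable set and Θ a set of parameters. For each θ ∈ Θ let p^θ be a transition matrix on 𝒳 and π^θ an invariant probability vector for p^θ with π^θ i > 0 for all i ∈ 𝒳. Assume that for every θ ≠ θ' in Θ there exist i, j ∈ 𝒳 with p^θ i j ≠ p^{θ'} i j. Then the map G sending θ to the invariant pair distribution function F̂^θ : ℝ × ℝ → ℝ, F̂^θ(x, x') = ∑_{i ∈ 𝒳, i ≤ x} π^θ(i) · ∑_{j ∈ 𝒳, j ≤ x'} p^θ i j, is injective on Θ. -/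
open MeasureTheory ProbabilityTheory Filter Topology
open scoped Classical

noncomputable section

section AuxInvariantPairDF
open Set
open scoped ENNReal

lemma isCountablySpanning_Iic : IsCountablySpanning (range Iic : Set (Set ℝ)) := by
  refine ⟨fun n => Iic (n : ℝ), fun n => ⟨n, rfl⟩, ?_⟩
  ext x
  simp only [mem_iUnion, mem_Iic, mem_univ, iff_true]
  exact ⟨⌈x⌉₊, Nat.le_ceil x⟩

lemma gen_prod : MeasurableSpace.generateFrom
    (image2 (· ×ˢ ·) (range Iic : Set (Set ℝ)) (range Iic : Set (Set ℝ)))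
    = Prod.instMeasurableSpace := by
  refine generateFrom_eq_prod ?_ ?_ isCountablySpanning_Iic isCountablySpanning_Iic <;>
    rw [← borel_eq_generateFrom_Iic ℝ] <;> rfl

/-- measure built from point masses on pairs from `S`. -/
def pmMeasure (S : Set ℝ) (f : ↥S → ↥S → ℝ≥0∞) : Measure (ℝ × ℝ) :=
  Measure.sum (fun ij : ↥S × ↥S => f ij.1 ij.2 • Measure.dirac ((ij.1 : ℝ), (ij.2 : ℝ)))

lemma pmMeasure_apply (S : Set ℝ) (f : ↥S → ↥S → ℝ≥0∞) {s : Set (ℝ × ℝ)}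
    (hs : MeasurableSet s) :
    pmMeasure S f s = ∑' ij : ↥S × ↥S,
      (if ((ij.1 : ℝ), (ij.2 : ℝ)) ∈ s then f ij.1 ij.2 else 0) := by
  rw [pmMeasure, Measure.sum_apply _ hs]
  refine tsum_congr fun ij => ?_
  rw [Measure.smul_apply, Measure.dirac_apply' _ hs, smul_eq_mul, indicator_apply]
  split_ifs <;> simp

lemma rect_ext (S : Set ℝ) (f g : ↥S → ↥S → ℝ≥0∞)
    (hf : (∑' ij : ↥S × ↥S, f ij.1 ij.2) ≠ ⊤)
    (htot : (∑' ij : ↥S × ↥S, f ij.1 ij.2) = ∑' ij : ↥S × ↥S, g ij.1 ij.2)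
    (h : ∀ x x' : ℝ,
      (∑' ij : ↥S × ↥S, if (ij.1 : ℝ) ≤ x ∧ (ij.2 : ℝ) ≤ x' then f ij.1 ij.2 else 0) =
      ∑' ij : ↥S × ↥S, if (ij.1 : ℝ) ≤ x ∧ (ij.2 : ℝ) ≤ x' then g ij.1 ij.2 else 0)
    (i j : ↥S) : f i j = g i j := by
  have huniv : ∀ h : ↥S → ↥S → ℝ≥0∞,
      pmMeasure S h univ = ∑' ij : ↥S × ↥S, h ij.1 ij.2 := by
    intro h
    rw [pmMeasure_apply _ _ MeasurableSet.univ]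
    simp
  have hfin : IsFiniteMeasure (pmMeasure S f) := ⟨by rw [huniv]; exact hf.lt_top⟩
  have heq : pmMeasure S f = pmMeasure S g := by
    refine ext_of_generate_finite _ gen_prod.symm
      (isPiSystem_Iic.prod isPiSystem_Iic) ?_ (by rw [huniv, huniv, htot])
    rintro _ ⟨_, ⟨a, rfl⟩, _, ⟨b, rfl⟩, rfl⟩
    rw [pmMeasure_apply _ _ (measurableSet_Iic.prod measurableSet_Iic),
      pmMeasure_apply _ _ (measurableSet_Iic.prod measurableSet_Iic)]
    simpa using h a b
  have hsingle : ∀ h : ↥S → ↥S → ℝ≥0∞,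
      pmMeasure S h {((i : ℝ), (j : ℝ))} = h i j := by
    intro h
    rw [pmMeasure_apply _ _ (measurableSet_singleton _)]
    rw [tsum_eq_single (i, j)]
    · simp
    · rintro ⟨i', j'⟩ hne
      simp only [mem_singleton_iff, Prod.mk.injEq, ite_eq_right_iff, and_imp]
      intro hi hj
      exact absurd (by simp [Prod.ext_iff, Subtype.ext hi, Subtype.ext hj]) hne
  rw [← hsingle f, ← hsingle g, heq]

lemma summable_of_nonneg_tsum_one {ι : Type*} {f : ι → ℝ} (h : ∑' i, f i = 1) : Summable f := by
  by_contra hs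
  rw [tsum_eq_zero_of_not_summable hs] at h
  norm_num at h

variable {S : Set ℝ}

lemma rect_to_real (π : ↥S → ℝ) (p : ↥S → ↥S → ℝ)
    (hπ0 : ∀ i, 0 ≤ π i) (hπ1 : ∑' i, π i = 1)
    (hp0 : ∀ i j, 0 ≤ p i j) (hp1 : ∀ i, ∑' j, p i j = 1) (x x' : ℝ) :
    (∑' ij : ↥S × ↥S, if (ij.1 : ℝ) ≤ x ∧ (ij.2 : ℝ) ≤ x' then
        ENNReal.ofReal (π ij.1 * p ij.1 ij.2) else 0)
      = ENNReal.ofReal (∑' i : ↥S, if (i : ℝ) ≤ x then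
          π i * ∑' j : ↥S, (if (j : ℝ) ≤ x' then p i j else 0) else 0) := by
  have hps : ∀ i, Summable (p i) := fun i => summable_of_nonneg_tsum_one (hp1 i)
  have hπs : Summable π := summable_of_nonneg_tsum_one hπ1
  have hinner_s : ∀ i, Summable (fun j : ↥S => if (j : ℝ) ≤ x' then p i j else 0) :=
    fun i => (hps i).of_nonneg_of_le
      (fun j => by split_ifs with h; exacts [hp0 i j, le_rfl])
      (fun j => by split_ifs with h; exacts [le_rfl, hp0 i j])
  have hinner_nonneg : ∀ i, 0 ≤ ∑' j : ↥S, (if (j : ℝ) ≤ x' then p i j else 0) :=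
    fun i => tsum_nonneg fun j => by split_ifs with h; exacts [hp0 i j, le_rfl]
  have hinner_le : ∀ i, (∑' j : ↥S, (if (j : ℝ) ≤ x' then p i j else 0)) ≤ 1 := by
    intro i
    rw [← hp1 i]
    exact Summable.tsum_le_tsum (fun j => by split_ifs with h; exacts [le_rfl, hp0 i j])
      (hinner_s i) (hps i)
  have houter_nonneg : ∀ i : ↥S, 0 ≤ (if (i : ℝ) ≤ x then
      π i * ∑' j : ↥S, (if (j : ℝ) ≤ x' then p i j else 0) else 0) :=
    fun i => by split_ifs with h
                exacts [mul_nonneg (hπ0 i) (hinner_nonneg i), le_rfl]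
  have houter_s : Summable (fun i : ↥S => if (i : ℝ) ≤ x then
      π i * ∑' j : ↥S, (if (j : ℝ) ≤ x' then p i j else 0) else 0) :=
    hπs.of_nonneg_of_le houter_nonneg
      (fun i => by
        split_ifs with h
        · calc π i * ∑' j : ↥S, (if (j : ℝ) ≤ x' then p i j else 0)
              ≤ π i * 1 := mul_le_mul_of_nonneg_left (hinner_le i) (hπ0 i)
            _ = π i := mul_one _
        · exact hπ0 i)
  have key : ∀ i : ↥S, (∑' j : ↥S, if (i : ℝ) ≤ x ∧ (j : ℝ) ≤ x' then
      ENNReal.ofReal (π i * p i j) else 0)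
      = ENNReal.ofReal (if (i : ℝ) ≤ x then
          π i * ∑' j : ↥S, (if (j : ℝ) ≤ x' then p i j else 0) else 0) := by
    intro i
    by_cases hi : (i : ℝ) ≤ x
    · simp only [hi, true_and, if_true]
      have h1 : ∀ j : ↥S, (if (j : ℝ) ≤ x' then ENNReal.ofReal (π i * p i j) else 0)
          = ENNReal.ofReal (π i) * ENNReal.ofReal (if (j : ℝ) ≤ x' then p i j else 0) := by
        intro j
        split_ifs with h
        · exact ENNReal.ofReal_mul (hπ0 i)
        · simp
      rw [tsum_congr h1, ENNReal.tsum_mul_left,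
        ← ENNReal.ofReal_tsum_of_nonneg (fun j => by split_ifs with h; exacts [hp0 i j, le_rfl])
          (hinner_s i),
        ← ENNReal.ofReal_mul (hπ0 i)]
    · simp [hi]
  rw [ENNReal.tsum_prod (f := fun i j : ↥S => if (i : ℝ) ≤ x ∧ (j : ℝ) ≤ x' then
      ENNReal.ofReal (π i * p i j) else 0), tsum_congr key,
    ← ENNReal.ofReal_tsum_of_nonneg houter_nonneg houter_s]

lemma total_to_one (π : ↥S → ℝ) (p : ↥S → ↥S → ℝ)
    (hπ0 : ∀ i, 0 ≤ π i) (hπ1 : ∑' i, π i = 1)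
    (hp0 : ∀ i j, 0 ≤ p i j) (hp1 : ∀ i, ∑' j, p i j = 1) :
    (∑' ij : ↥S × ↥S, ENNReal.ofReal (π ij.1 * p ij.1 ij.2)) = 1 := by
  have hps : ∀ i, Summable (p i) := fun i => summable_of_nonneg_tsum_one (hp1 i)
  have hπs : Summable π := summable_of_nonneg_tsum_one hπ1
  rw [ENNReal.tsum_prod (f := fun i j : ↥S => ENNReal.ofReal (π i * p i j))]
  have key : ∀ i : ↥S, (∑' j : ↥S, ENNReal.ofReal (π i * p i j)) = ENNReal.ofReal (π i) := by
    intro i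
    calc (∑' j : ↥S, ENNReal.ofReal (π i * p i j))
        = ∑' j : ↥S, ENNReal.ofReal (π i) * ENNReal.ofReal (p i j) :=
          tsum_congr fun j => ENNReal.ofReal_mul (hπ0 i)
      _ = ENNReal.ofReal (π i) * ∑' j : ↥S, ENNReal.ofReal (p i j) := ENNReal.tsum_mul_left
      _ = ENNReal.ofReal (π i) * ENNReal.ofReal (∑' j, p i j) := by
          rw [ENNReal.ofReal_tsum_of_nonneg (hp0 i) (hps i)]
      _ = ENNReal.ofReal (π i) := by rw [hp1 i]; simp
  rw [tsum_congr key, ← ENNReal.ofReal_tsum_of_nonneg hπ0 hπs, hπ1]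
  simp

end AuxInvariantPairDF

/-- under distinguishability of the transition matrices and positivity of the
invariant probabilities, the map `G` sending `θ` to the invariant pair distribution function
`F̂^θ(x,x') = ∑_{i ≤ x} π^θ(i) · ∑_{j ≤ x'} p^θ i j` is injective. -/
theorem invariant_pair_df_injective
    (S : Set ℝ) (hS : S.Countable) {Θ : Type*}
    (p : Θ → ↥S → ↥S → ℝ) (π : Θ → ↥S → ℝ)
    (hp : ∀ θ, IsTransMatrix (p θ))
    (hπ : ∀ θ, IsProbVector (π θ))
    (hinv : ∀ θ, IsInvariantVec (p θ) (π θ))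
    (hpos : ∀ θ i, 0 < π θ i)
    (hdist : ∀ θ θ', θ ≠ θ' → ∃ i j, p θ i j ≠ p θ' i j) :
    Function.Injective (fun θ : Θ => fun xx : ℝ × ℝ =>
      ∑' i : ↥S, (if (i : ℝ) ≤ xx.1 then
        π θ i * ∑' j : ↥S, (if (j : ℝ) ≤ xx.2 then p θ i j else 0) else 0)) := by
  intro θ θ' hG
  by_contra hne
  obtain ⟨i, j, hpij⟩ := hdist θ θ' hne
  have htot : ∀ ϑ, (∑' ij : ↥S × ↥S, ENNReal.ofReal (π ϑ ij.1 * p ϑ ij.1 ij.2)) = 1 :=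
    fun ϑ => total_to_one (π ϑ) (p ϑ) (hπ ϑ).1 (hπ ϑ).2 (hp ϑ).1 (hp ϑ).2
  have hrect : ∀ x x' : ℝ,
      (∑' ij : ↥S × ↥S, if (ij.1 : ℝ) ≤ x ∧ (ij.2 : ℝ) ≤ x' then
        ENNReal.ofReal (π θ ij.1 * p θ ij.1 ij.2) else 0) =
      ∑' ij : ↥S × ↥S, if (ij.1 : ℝ) ≤ x ∧ (ij.2 : ℝ) ≤ x' then
        ENNReal.ofReal (π θ' ij.1 * p θ' ij.1 ij.2) else 0 := by
    intro x x'
    rw [rect_to_real (π θ) (p θ) (hπ θ).1 (hπ θ).2 (hp θ).1 (hp θ).2 x x',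
      rect_to_real (π θ') (p θ') (hπ θ').1 (hπ θ').2 (hp θ').1 (hp θ').2 x x']
    exact congrArg ENNReal.ofReal (congrFun hG (x, x'))
  have hq : ∀ a b, π θ a * p θ a b = π θ' a * p θ' a b := by
    intro a b
    have h := rect_ext S (fun a b => ENNReal.ofReal (π θ a * p θ a b))
      (fun a b => ENNReal.ofReal (π θ' a * p θ' a b))
      (by rw [htot θ]; exact ENNReal.one_ne_top) (by rw [htot θ, htot θ']) hrect a b
    exact (ENNReal.ofReal_eq_ofReal_iff
      (mul_nonneg ((hπ θ).1 a) ((hp θ).1 a b))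
      (mul_nonneg ((hπ θ').1 a) ((hp θ').1 a b))).mp h
  have hπeq : ∀ a, π θ a = π θ' a := by
    intro a
    have h1 : π θ a = ∑' b, π θ a * p θ a b := by
      rw [tsum_mul_left, (hp θ).2 a, mul_one]
    have h2 : π θ' a = ∑' b, π θ' a * p θ' a b := by
      rw [tsum_mul_left, (hp θ').2 a, mul_one]
    rw [h1, h2]
    exact tsum_congr fun b => hq a b
  apply hpij
  have h := hq i j
  rw [hπeq i] at h
  exact mul_left_cancel₀ (ne_of_gt (hpos θ' i)) h
end
end

section
/- Let 𝒳 be a countable set, (Ω, 𝓕, P) a probability space, X : ℕ → Ω → 𝒳 a sequence of random variables, Y_s = (X_s, X_{s+1}), and μ a probability vector on 𝒳 × 𝒳. Then the following are equivalent: (a) for all subsets A, B ⊆ 𝒳, (1/T) ∑_{s=0}^{T-1} 1(X_s ∈ A, X_{s+1} ∈ B) converges in P-probability to ∑_{(i,j) ∈ A × B} μ(i,j) as T → ∞; (b) for every bounded function g : 𝒳 × 𝒳 → ℝ, (1/T) ∑_{s=0}^{T-1} g(Y_s) converges in P-probability to ∑_{(i,j)} g(i,j) μ(i,j) as T → ∞.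 -/
open MeasureTheory ProbabilityTheory Filter Topology
open scoped Classical

noncomputable section

open scoped ENNReal

section Helpers
variable {Ω : Type*} [MeasurableSpace Ω] {P : Measure Ω}

lemma tendstoInProb_const (c : ℝ) : TendstoInProb P (fun _ _ => c) c := by
  intro ε hε
  have h : {ω : Ω | ε < abs (c - c)} = ∅ := by
    ext ω; simp [hε.not_gt]
  have h2 : (fun T : ℕ => P {ω | ε < abs (c - c)}) = fun _ => (0 : ℝ≥0∞) := by
    funext T; rw [h, measure_empty]
  rw [h2]
  exact tendsto_const_nhds

lemma tendstoInProb_add {Z W : ℕ → Ω → ℝ} {a b : ℝ}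
    (hZ : TendstoInProb P Z a) (hW : TendstoInProb P W b) :
    TendstoInProb P (fun T ω => Z T ω + W T ω) (a + b) := by
  intro ε hε
  have h1 := hZ (ε/2) (by linarith)
  have h2 := hW (ε/2) (by linarith)
  have hsub : ∀ T, {ω | ε < |Z T ω + W T ω - (a + b)|} ⊆
      {ω | ε/2 < |Z T ω - a|} ∪ {ω | ε/2 < |W T ω - b|} := by
    intro T ω hω
    by_contra hc
    simp only [Set.mem_union, Set.mem_setOf_eq, not_or, not_lt] at hc
    have hb : |Z T ω + W T ω - (a + b)| ≤ ε := by
      calc |Z T ω + W T ω - (a + b)| = |(Z T ω - a) + (W T ω - b)| := by ring_nf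
        _ ≤ |Z T ω - a| + |W T ω - b| := abs_add_le _ _
        _ ≤ ε/2 + ε/2 := add_le_add hc.1 hc.2
        _ = ε := by ring
    exact absurd hω (by simpa using hb.not_gt)
  refine tendsto_of_tendsto_of_tendsto_of_le_of_le tendsto_const_nhds ?_
    (fun T => zero_le)
    (fun T => (measure_mono (hsub T)).trans (measure_union_le _ _))
  simpa using h1.add h2

lemma tendstoInProb_const_mul {Z : ℕ → Ω → ℝ} {a : ℝ} (c : ℝ)
    (hZ : TendstoInProb P Z a) :
    TendstoInProb P (fun T ω => c * Z T ω) (c * a) := by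
  rcases eq_or_ne c 0 with rfl | hc
  · simpa using tendstoInProb_const (P := P) 0
  · intro ε hε
    have hcp : 0 < |c| := abs_pos.2 hc
    have h := hZ (ε/|c|) (div_pos hε hcp)
    have hset : ∀ T, {ω | ε < |c * Z T ω - c * a|} = {ω | ε/|c| < |Z T ω - a|} := by
      intro T; ext ω
      simp only [Set.mem_setOf_eq, ← mul_sub, abs_mul]
      rw [div_lt_iff₀' hcp]
    simpa only [hset] using h

lemma tendstoInProb_finset_sum {ι : Type*} (F : Finset ι) (Z : ι → ℕ → Ω → ℝ) (c : ι → ℝ)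
    (h : ∀ i ∈ F, TendstoInProb P (Z i) (c i)) :
    TendstoInProb P (fun T ω => ∑ i ∈ F, Z i T ω) (∑ i ∈ F, c i) := by
  induction F using Finset.induction_on with
  | empty => simpa using tendstoInProb_const (P := P) 0
  | insert _ _ hnot ih =>
    rename_i i s
    simp only [Finset.sum_insert hnot]
    exact tendstoInProb_add (h i (Finset.mem_insert_self _ _))
      (ih fun j hj => h j (Finset.mem_insert_of_mem hj))

end Helpers

/-- the weak LLN for pair indicator frequencies over all sets `A, B ⊆ 𝒳`
is equivalent to the weak LLN for `(1/T) ∑ g(Y_s)` over all bounded `g : 𝒳 × 𝒳 → ℝ`,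
where `Y_s = (X_s, X_{s+1})`. -/
theorem pair_LLN_sets_iff_bounded_functions
    {𝒳 : Type*} [Countable 𝒳] [MeasurableSpace 𝒳] [MeasurableSingletonClass 𝒳]
    {Ω : Type*} [MeasurableSpace Ω] (P : Measure Ω) [IsProbabilityMeasure P]
    (X : ℕ → Ω → 𝒳) (hX : ∀ n, Measurable (X n))
    (μ : 𝒳 × 𝒳 → ℝ) (hμ : IsProbVector μ) :
    (∀ A B : Set 𝒳,
      TendstoInProb P
        (fun T ω => (T : ℝ)⁻¹ * ∑ s ∈ Finset.range T,
          (if X s ω ∈ A ∧ X (s + 1) ω ∈ B then (1 : ℝ) else 0))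
        (∑' y : 𝒳 × 𝒳, if y.1 ∈ A ∧ y.2 ∈ B then μ y else 0)) ↔
    (∀ g : 𝒳 × 𝒳 → ℝ, (∃ C, ∀ y, |g y| ≤ C) →
      TendstoInProb P
        (fun T ω => (T : ℝ)⁻¹ * ∑ s ∈ Finset.range T, g (X s ω, X (s + 1) ω))
        (∑' y : 𝒳 × 𝒳, g y * μ y)) := by
  constructor
  · -- hard direction
    intro h g hg
    obtain ⟨C₀, hC₀⟩ := hg
    set C : ℝ := |C₀| with hCdef
    have hgC : ∀ y, |g y| ≤ C := fun y => (hC₀ y).trans (le_abs_self _)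
    have hC : 0 ≤ C := abs_nonneg _
    have hμpos := hμ.1
    have hμ1 := hμ.2
    have hμsum : Summable μ := by
      by_contra hs
      rw [tsum_eq_zero_of_not_summable hs] at hμ1
      exact one_ne_zero hμ1.symm
    have hgsum : Summable (fun y => g y * μ y) := by
      refine Summable.of_abs (Summable.of_nonneg_of_le (fun y => abs_nonneg _)
        (fun y => ?_) (hμsum.mul_left C))
      rw [abs_mul, abs_of_nonneg (hμpos y)]
      exact mul_le_mul_of_nonneg_right (hgC y) (hμpos y)
    have hfreq : ∀ y : 𝒳 × 𝒳, TendstoInProb P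
        (fun T ω => (T:ℝ)⁻¹ * ∑ s ∈ Finset.range T,
          (if X s ω ∈ ({y.1} : Set 𝒳) ∧ X (s+1) ω ∈ ({y.2} : Set 𝒳) then (1:ℝ) else 0))
        (μ y) := by
      intro y
      have hy := h {y.1} {y.2}
      have heq : (∑' z : 𝒳 × 𝒳,
          if z.1 ∈ ({y.1} : Set 𝒳) ∧ z.2 ∈ ({y.2} : Set 𝒳) then μ z else 0) = μ y := by
        rw [tsum_eq_single y]
        · simp
        · intro z hz
          rw [if_neg]
          simp only [Set.mem_singleton_iff]
          rintro ⟨h1, h2⟩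
          exact hz (Prod.ext h1 h2)
      convert hy
      convert heq.symm
    have hU : TendstoInProb P
        (fun T ω => (T:ℝ)⁻¹ * ∑ s ∈ Finset.range T,
          (if X s ω ∈ (Set.univ : Set 𝒳) ∧ X (s+1) ω ∈ (Set.univ : Set 𝒳) then (1:ℝ) else 0))
        1 := by
      have hu := h Set.univ Set.univ
      simp only [Set.mem_univ, and_self, if_true, hμ1] at hu ⊢
      exact hu
    set L : ℝ := ∑' y, g y * μ y with hLdef
    intro ε hε
    set δ : ℝ := ε / (4 * (C + 1)) with hδdef
    have hδ : 0 < δ := div_pos hε (by positivity)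
    obtain ⟨F, hF⟩ : ∃ F : Finset (𝒳 × 𝒳), 1 - δ < ∑ y ∈ F, μ y := by
      have hhs : HasSum μ 1 := hμ1 ▸ hμsum.hasSum
      exact (hhs.eventually (eventually_gt_nhds (by linarith))).exists
    set δ' : ℝ := 1 - ∑ y ∈ F, μ y with hδ'def
    have hsum_le : ∑ y ∈ F, μ y ≤ 1 := by
      have := Summable.sum_le_tsum F (fun y _ => hμpos y) hμsum
      linarith [hμ1 ▸ this]
    have hδ'0 : 0 ≤ δ' := by rw [hδ'def]; linarith
    have hδ'δ : δ' < δ := by rw [hδ'def]; linarith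
    set m : ℝ := ∑ y ∈ F, g y * μ y with hmdef
    have hcompl_mu : ∑' (y : ↥((F : Set (𝒳 × 𝒳))ᶜ)), μ y = δ' := by
      have h1 := Summable.sum_add_tsum_compl (s := F) hμsum
      rw [hμ1] at h1
      rw [hδ'def]; linarith
    have hLm : |m - L| ≤ C * δ' := by
      have h1 := Summable.sum_add_tsum_compl (s := F) hgsum
      have h2 : L - m = ∑' (y : ↥((F : Set (𝒳 × 𝒳))ᶜ)), g y * μ y := by
        rw [hLdef, hmdef]; linarith
      rw [abs_sub_comm, h2]
      have hs1 : Summable (fun y : ↥((F : Set (𝒳 × 𝒳))ᶜ) => |g y * μ y|) :=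
        (hgsum.subtype _).abs
      have hs2 : Summable (fun y : ↥((F : Set (𝒳 × 𝒳))ᶜ) => C * μ y) :=
        (hμsum.subtype _).mul_left C
      calc |∑' (y : ↥((F : Set (𝒳 × 𝒳))ᶜ)), g y * μ y|
          ≤ ∑' (y : ↥((F : Set (𝒳 × 𝒳))ᶜ)), |g y * μ y| := by
            simpa only [Real.norm_eq_abs] using norm_tsum_le_tsum_norm (f := fun y : ↥((F : Set (𝒳 × 𝒳))ᶜ) => g y * μ y) (by simpa only [Real.norm_eq_abs] using hs1)
        _ ≤ ∑' (y : ↥((F : Set (𝒳 × 𝒳))ᶜ)), C * μ y := by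
            refine Summable.tsum_le_tsum (fun y => ?_) hs1 hs2
            rw [abs_mul, abs_of_nonneg (hμpos y)]
            exact mul_le_mul_of_nonneg_right (hgC _) (hμpos y)
        _ = C * δ' := by rw [tsum_mul_left, hcompl_mu]
    -- frequency pieces
    set freq : (𝒳 × 𝒳) → ℕ → Ω → ℝ := fun y T ω =>
      (T:ℝ)⁻¹ * ∑ s ∈ Finset.range T,
        (if X s ω ∈ ({y.1} : Set 𝒳) ∧ X (s+1) ω ∈ ({y.2} : Set 𝒳) then (1:ℝ) else 0)
      with hfreqdef
    set Z : ℕ → Ω → ℝ := fun T ω => ∑ y ∈ F, g y * freq y T ω with hZdef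
    set W : ℕ → Ω → ℝ := fun T ω =>
      ((T:ℝ)⁻¹ * ∑ s ∈ Finset.range T,
        (if X s ω ∈ (Set.univ : Set 𝒳) ∧ X (s+1) ω ∈ (Set.univ : Set 𝒳) then (1:ℝ) else 0))
      + (-1) * (∑ y ∈ F, freq y T ω) with hWdef
    have hZc : TendstoInProb P Z m :=
      tendstoInProb_finset_sum F (fun y T ω => g y * freq y T ω) (fun y => g y * μ y)
        (fun y _ => tendstoInProb_const_mul (g y) (hfreq y))
    have hWc : TendstoInProb P W δ' := by
      have hck := tendstoInProb_add hU (tendstoInProb_const_mul (-1)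
        (tendstoInProb_finset_sum F (fun y => freq y) (fun y => μ y) (fun y _ => hfreq y)))
      have : (1 : ℝ) + (-1) * ∑ y ∈ F, μ y = δ' := by rw [hδ'def]; ring
      rwa [this] at hck
    -- pointwise identities
    have hind : ∀ (s : ℕ) (ω : Ω) (y : 𝒳 × 𝒳),
        (if X s ω ∈ ({y.1} : Set 𝒳) ∧ X (s+1) ω ∈ ({y.2} : Set 𝒳) then (1:ℝ) else 0)
        = (if (X s ω, X (s+1) ω) = y then (1:ℝ) else 0) := by
      intro s ω y
      refine if_congr ?_ rfl rfl
      simp [Prod.ext_iff]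
    have hZeq : ∀ T ω, Z T ω = (T:ℝ)⁻¹ * ∑ s ∈ Finset.range T,
        (if (X s ω, X (s+1) ω) ∈ F then g (X s ω, X (s+1) ω) else 0) := by
      intro T ω
      rw [hZdef]
      simp only [hfreqdef, hind]
      calc ∑ y ∈ F, g y * ((T:ℝ)⁻¹ * ∑ s ∈ Finset.range T,
              (if (X s ω, X (s+1) ω) = y then (1:ℝ) else 0))
          = (T:ℝ)⁻¹ * ∑ y ∈ F, ∑ s ∈ Finset.range T,
              g y * (if (X s ω, X (s+1) ω) = y then (1:ℝ) else 0) := by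
            rw [Finset.mul_sum]
            refine Finset.sum_congr rfl fun y _ => ?_
            rw [Finset.mul_sum, ← Finset.mul_sum, ← Finset.mul_sum, mul_left_comm]
        _ = (T:ℝ)⁻¹ * ∑ s ∈ Finset.range T, ∑ y ∈ F,
              g y * (if (X s ω, X (s+1) ω) = y then (1:ℝ) else 0) := by
            rw [Finset.sum_comm]
        _ = _ := by
            congr 1
            refine Finset.sum_congr rfl fun s _ => ?_
            simp only [mul_ite, mul_one, mul_zero]
            exact Finset.sum_ite_eq F _ g
    have hWeq : ∀ T ω, W T ω = (T:ℝ)⁻¹ * ∑ s ∈ Finset.range T,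
        (if (X s ω, X (s+1) ω) ∈ F then (0:ℝ) else 1) := by
      intro T ω
      rw [hWdef]
      simp only [hfreqdef, hind, Set.mem_univ, and_self, if_true]
      have h1 : ∑ y ∈ F, ((T:ℝ)⁻¹ * ∑ s ∈ Finset.range T,
            (if (X s ω, X (s+1) ω) = y then (1:ℝ) else 0))
          = (T:ℝ)⁻¹ * ∑ s ∈ Finset.range T,
            (if (X s ω, X (s+1) ω) ∈ F then (1:ℝ) else 0) := by
        rw [← Finset.mul_sum, Finset.sum_comm]
        congr 1
        exact Finset.sum_congr rfl fun s _ => Finset.sum_ite_eq F _ (fun _ => (1:ℝ))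
      rw [h1, neg_one_mul, ← sub_eq_add_neg, ← mul_sub, ← Finset.sum_sub_distrib]
      congr 1
      refine Finset.sum_congr rfl fun s _ => ?_
      by_cases hmem : (X s ω, X (s+1) ω) ∈ F <;> simp [hmem]
    have hW0 : ∀ T ω, 0 ≤ W T ω := by
      intro T ω
      rw [hWeq]
      refine mul_nonneg (inv_nonneg.2 (Nat.cast_nonneg T)) (Finset.sum_nonneg fun s _ => ?_)
      split <;> norm_num
    have hpt : ∀ (T : ℕ) (ω : Ω),
        |((T:ℝ)⁻¹ * ∑ s ∈ Finset.range T, g (X s ω, X (s+1) ω)) - Z T ω| ≤ C * W T ω := by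
      intro T ω
      rw [hZeq, hWeq, ← mul_sub, ← Finset.sum_sub_distrib]
      have hTn : (0:ℝ) ≤ (T:ℝ)⁻¹ := inv_nonneg.2 (Nat.cast_nonneg T)
      have h2 : |∑ s ∈ Finset.range T, (g (X s ω, X (s+1) ω) -
            if (X s ω, X (s+1) ω) ∈ F then g (X s ω, X (s+1) ω) else 0)|
          ≤ ∑ s ∈ Finset.range T,
            C * (if (X s ω, X (s+1) ω) ∈ F then (0:ℝ) else 1) := by
        refine (Finset.abs_sum_le_sum_abs _ _).trans (Finset.sum_le_sum fun s _ => ?_)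
        by_cases hmem : (X s ω, X (s+1) ω) ∈ F
        · simp [hmem]
        · simp only [hmem, if_false, sub_zero, mul_one]
          exact hgC _
      calc |(T:ℝ)⁻¹ * ∑ s ∈ Finset.range T, (g (X s ω, X (s+1) ω) -
              if (X s ω, X (s+1) ω) ∈ F then g (X s ω, X (s+1) ω) else 0)|
          = (T:ℝ)⁻¹ * |∑ s ∈ Finset.range T, (g (X s ω, X (s+1) ω) -
              if (X s ω, X (s+1) ω) ∈ F then g (X s ω, X (s+1) ω) else 0)| := by
            rw [abs_mul, abs_inv, Nat.abs_cast]
        _ ≤ (T:ℝ)⁻¹ * ∑ s ∈ Finset.range T,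
              C * (if (X s ω, X (s+1) ω) ∈ F then (0:ℝ) else 1) := by
            exact mul_le_mul_of_nonneg_left h2 hTn
        _ = C * ((T:ℝ)⁻¹ * ∑ s ∈ Finset.range T,
              (if (X s ω, X (s+1) ω) ∈ F then (0:ℝ) else 1)) := by
            rw [← Finset.mul_sum]
            ring
    -- assemble
    have hδeq : 4*(C*δ) + 4*δ = ε := by
      rw [hδdef]; field_simp
    clear_value C L δ δ' m freq Z W
    have key : ∀ T : ℕ, {ω | ε <
          |((T:ℝ)⁻¹ * ∑ s ∈ Finset.range T, g (X s ω, X (s+1) ω)) - L|}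
        ⊆ {ω | ε/4 < |Z T ω - m|} ∪ {ω | δ < |W T ω - δ'|} := by
      intro T ω hω
      by_contra hc
      simp only [Set.mem_union, Set.mem_setOf_eq, not_or, not_lt] at hc
      obtain ⟨h1, h2⟩ := hc
      simp only [Set.mem_setOf_eq] at hω
      have hWb : W T ω ≤ δ' + δ := by
        have := (abs_le.1 h2).2
        linarith
      have hS := hpt T ω
      have hT1 : |((T:ℝ)⁻¹ * ∑ s ∈ Finset.range T, g (X s ω, X (s+1) ω)) - L|
          ≤ |((T:ℝ)⁻¹ * ∑ s ∈ Finset.range T, g (X s ω, X (s+1) ω)) - Z T ω|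
            + |Z T ω - L| := abs_sub_le _ _ _
      have hT2 : |Z T ω - L| ≤ |Z T ω - m| + |m - L| := abs_sub_le _ _ _
      have hCW : C * W T ω ≤ C * (δ' + δ) := mul_le_mul_of_nonneg_left hWb hC
      have hCδ' : C * δ' ≤ C * δ := mul_le_mul_of_nonneg_left hδ'δ.le hC
      have hCW2 : C * (δ' + δ) = C * δ' + C * δ := mul_add C δ' δ
      have k1 : ε < C * W T ω + (ε/4 + C*δ') :=
        lt_of_lt_of_le hω (hT1.trans (add_le_add hS (hT2.trans (add_le_add h1 hLm))))
      have k2 : C * W T ω ≤ C*δ' + C*δ := hCW.trans_eq hCW2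
      linarith [k1, k2, hCδ', hδeq, hδ]
    have hZ4 := hZc (ε/4) (by linarith)
    have hW4 := hWc δ hδ
    refine tendsto_of_tendsto_of_tendsto_of_le_of_le tendsto_const_nhds ?_
      (fun T => zero_le)
      (fun T => (measure_mono (key T)).trans (measure_union_le _ _))
    simpa using hZ4.add hW4
  · -- easy direction
    intro h A B
    have hb := h (fun y => if y.1 ∈ A ∧ y.2 ∈ B then (1:ℝ) else 0)
      ⟨1, fun y => by by_cases hc : (y.1 ∈ A ∧ y.2 ∈ B) <;> simp [hc]⟩
    simp only [ite_mul, one_mul, zero_mul] at hb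
    exact hb
end
end

section
/- Let 𝒳 be a countable set, (Ω, 𝓕, P) a probability space, and (X_n)_{n≥0} a homogeneous Markov chain on 𝒳 with transition matrix p. Let π be a probability vector on 𝒳 and suppose the weak law of large numbers holds for the chain: for every i ∈ 𝒳, (1/T) ∑_{s=0}^{T-1} 1(X_s = i) converges in P-probability to π(i) as T → ∞. Then the weak law of large numbers holds for the pair process Y_s = (X_s, X_{s+1}): for all i, j ∈ 𝒳, (1/T) ∑_{s=0}^{T-1} 1(X_s = i, X_{s+1} = j) converges in P-probability to π(i) · p i j as T → ∞. -/
open MeasureTheory ProbabilityTheory Filter Topology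
open scoped Classical

noncomputable section

lemma markov_key {𝒳 : Type*} [Countable 𝒳] [MeasurableSpace 𝒳] [MeasurableSingletonClass 𝒳]
    {Ω : Type*} [MeasurableSpace Ω] (P : Measure Ω)
    (X : ℕ → Ω → 𝒳) (hX : ∀ n, Measurable (X n))
    (p : 𝒳 → 𝒳 → ℝ) (hMC : IsMarkovChain P X p)
    (t : ℕ) (i j : 𝒳) (Q : (Fin (t + 1) → 𝒳) → Prop)
    (hQ : ∀ x, Q x → x (Fin.last t) = i) :
    P {ω | Q (fun r => X r ω) ∧ X (t + 1) ω = j}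
      = ENNReal.ofReal (p i j) * P {ω | Q (fun r => X r ω)} := by
  classical
  set A : (Fin (t + 1) → 𝒳) → Set Ω := fun x => {ω | ∀ r : Fin (t + 1), X r ω = x r} with hA
  have hAmeas : ∀ x, MeasurableSet (A x) := by
    intro x
    have : A x = ⋂ r : Fin (t + 1), X r ⁻¹' {x r} := by
      ext ω; simp [hA, Set.mem_iInter]
    rw [this]
    exact MeasurableSet.iInter fun r => hX r (measurableSet_singleton _)
  set S : Set (Fin (t + 1) → 𝒳) := {x | Q x} with hS
  have hdisj : S.PairwiseDisjoint A := by
    intro x hx y hy hxy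
    rw [Function.onFun, Set.disjoint_left]
    intro ω hωx hωy
    exact hxy (funext fun r => (hωx r).symm.trans (hωy r))
  have hU1 : {ω | Q (fun r => X r ω)} = ⋃ x ∈ S, A x := by
    ext ω
    simp only [Set.mem_setOf_eq, Set.mem_iUnion]
    constructor
    · intro h; exact ⟨fun r => X r ω, h, fun r => rfl⟩
    · rintro ⟨x, hx, hωx⟩
      have : (fun r : Fin (t + 1) => X r ω) = x := funext hωx
      rw [this]; exact hx
  set B : Set Ω := {ω | X (t + 1) ω = j} with hB
  have hBmeas : MeasurableSet B := hX (t + 1) (measurableSet_singleton j)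
  have hU2 : {ω | Q (fun r => X r ω) ∧ X (t + 1) ω = j} = ⋃ x ∈ S, (A x ∩ B) := by
    ext ω
    simp only [Set.mem_setOf_eq, Set.mem_iUnion, Set.mem_inter_iff]
    constructor
    · rintro ⟨h, hj⟩; exact ⟨fun r => X r ω, h, fun r => rfl, hj⟩
    · rintro ⟨x, hx, hωx, hj⟩
      have : (fun r : Fin (t + 1) => X r ω) = x := funext hωx
      exact ⟨this ▸ hx, hj⟩
  have hdisj2 : S.PairwiseDisjoint (fun x => A x ∩ B) := by
    intro x hx y hy hxy
    exact ((hdisj hx hy hxy).mono Set.inter_subset_left Set.inter_subset_left)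
  rw [hU1, hU2,
    measure_biUnion (Set.to_countable S) hdisj2 (fun x _ => (hAmeas x).inter hBmeas),
    measure_biUnion (Set.to_countable S) hdisj (fun x _ => hAmeas x),
    ← ENNReal.tsum_mul_left]
  refine tsum_congr fun x => ?_
  have hx : Q (x : Fin (t + 1) → 𝒳) := x.2
  have := hMC t x j
  rw [hQ x hx] at this
  exact this

lemma bdd_integrable {Ω : Type*} [MeasurableSpace Ω] (P : Measure Ω) [IsProbabilityMeasure P]
    (g : Ω → ℝ) (hg : Measurable g) (C : ℝ) (hb : ∀ ω, |g ω| ≤ C) : Integrable g P :=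
  ⟨hg.aestronglyMeasurable,
    HasFiniteIntegral.of_bounded (C := C) (Filter.Eventually.of_forall fun ω => by
      simpa using hb ω)⟩

lemma ite_integrable {Ω : Type*} [MeasurableSpace Ω] (P : Measure Ω) [IsProbabilityMeasure P]
    (Q : Ω → Prop) [DecidablePred Q] (hs : MeasurableSet {ω | Q ω}) :
    Integrable (fun ω => if Q ω then (1 : ℝ) else 0) P := by
  refine bdd_integrable P _ (Measurable.ite hs measurable_const measurable_const) 1 ?_
  intro ω; by_cases h : Q ω <;> simp [h]

lemma integral_ite_eq {Ω : Type*} [MeasurableSpace Ω] (P : Measure Ω)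
    (Q : Ω → Prop) [DecidablePred Q] (hs : MeasurableSet {ω | Q ω}) :
    ∫ ω, (if Q ω then (1 : ℝ) else 0) ∂P = (P {ω | Q ω}).toReal := by
  rw [← measureReal_def, ← integral_indicator_one hs]
  refine integral_congr_ae (Filter.Eventually.of_forall fun ω => ?_)
  by_cases h : Q ω <;> simp [Set.indicator_apply, h]

/-- for a homogeneous Markov chain, the weak LLN for single-state frequencies
(with limits `π(i)`) implies the weak LLN for pair frequencies (with limits `π(i) · p i j`). -/
theorem pair_LLN_of_LLN
    {𝒳 : Type*} [Countable 𝒳] [MeasurableSpace 𝒳] [MeasurableSingletonClass 𝒳]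
    {Ω : Type*} [MeasurableSpace Ω] (P : Measure Ω) [IsProbabilityMeasure P]
    (X : ℕ → Ω → 𝒳) (hX : ∀ n, Measurable (X n))
    (p : 𝒳 → 𝒳 → ℝ) (hp : IsTransMatrix p)
    (hMC : IsMarkovChain P X p)
    (π : 𝒳 → ℝ) (hπ : IsProbVector π)
    (hLLN : ∀ i : 𝒳,
      TendstoInProb P
        (fun T ω => (T : ℝ)⁻¹ * ∑ s ∈ Finset.range T, (if X s ω = i then (1 : ℝ) else 0))
        (π i)) :
    ∀ i j : 𝒳,
      TendstoInProb P
        (fun T ω => (T : ℝ)⁻¹ * ∑ s ∈ Finset.range T,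
          (if X s ω = i ∧ X (s + 1) ω = j then (1 : ℝ) else 0))
        (π i * p i j) := by
  intro i j
  have hc0 : 0 ≤ p i j := hp.1 i j
  have hsumm : Summable (p i) := by
    by_contra h
    have := hp.2 i
    rw [tsum_eq_zero_of_not_summable h] at this
    norm_num at this
  have hc1 : p i j ≤ 1 := by
    have := Summable.le_tsum hsumm j (fun k _ => hp.1 i k)
    rwa [hp.2 i] at this
  -- abbreviations (plain lets via local notation would not rewrite; we keep explicit)
  set c : ℝ := p i j with hcdef
  have D : ℕ → Ω → ℝ := fun s ω => 0
  clear D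
  -- measurability of basic sets
  have hms : ∀ (s : ℕ) (a : 𝒳), MeasurableSet {ω | X s ω = a} := fun s a =>
    hX s (measurableSet_singleton a)
  have hmand : ∀ (Q R : Ω → Prop), MeasurableSet {ω | Q ω} → MeasurableSet {ω | R ω} →
      MeasurableSet {ω | Q ω ∧ R ω} := fun Q R hQ hR => hQ.inter hR
  -- Markov-property consequences
  have k2 : ∀ t : ℕ, P {ω | X t ω = i ∧ X (t + 1) ω = j}
      = ENNReal.ofReal c * P {ω | X t ω = i} := fun t =>
    markov_key P X hX p hMC t i j (fun x => x (Fin.last t) = i) (fun x hx => hx)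
  have k_ff : ∀ s t : ℕ, s < t →
      P {ω | (X s ω = i ∧ X (s + 1) ω = j ∧ X t ω = i) ∧ X (t + 1) ω = j}
        = ENNReal.ofReal c * P {ω | X s ω = i ∧ X (s + 1) ω = j ∧ X t ω = i} := fun s t hst =>
    markov_key P X hX p hMC t i j
      (fun x => x ⟨s, by omega⟩ = i ∧ x ⟨s + 1, by omega⟩ = j ∧ x (Fin.last t) = i)
      (fun x hx => hx.2.2)
  have k_ef : ∀ s t : ℕ, s < t →
      P {ω | (X s ω = i ∧ X t ω = i) ∧ X (t + 1) ω = j}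
        = ENNReal.ofReal c * P {ω | X s ω = i ∧ X t ω = i} := fun s t hst =>
    markov_key P X hX p hMC t i j
      (fun x => x ⟨s, by omega⟩ = i ∧ x (Fin.last t) = i)
      (fun x hx => hx.2)
  -- the centered process
  set D : ℕ → Ω → ℝ := fun s ω =>
    (if X s ω = i ∧ X (s + 1) ω = j then (1 : ℝ) else 0)
      - c * (if X s ω = i then (1 : ℝ) else 0) with hDdef
  have hDmeas : ∀ s, Measurable (D s) := by
    intro s
    apply Measurable.sub
    · exact Measurable.ite (hmand _ _ (hms s i) (hms (s + 1) j)) measurable_const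
        measurable_const
    · exact (Measurable.ite (hms s i) measurable_const measurable_const).const_mul c
  have hDbd : ∀ s ω, |D s ω| ≤ 1 := by
    intro s ω
    simp only [hDdef]
    by_cases h1 : X s ω = i <;> by_cases h2 : X (s + 1) ω = j <;>
        simp [h1, h2, abs_le] <;> constructor <;> linarith
  have hDint : ∀ s, Integrable (D s) P := fun s => bdd_integrable P _ (hDmeas s) 1 (hDbd s)
  have toReal_mul_ofReal : ∀ (A : Set Ω), (ENNReal.ofReal c * P A).toReal = c * (P A).toReal := by
    intro A
    rw [ENNReal.toReal_mul, ENNReal.toReal_ofReal hc0]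
  -- expectations
  have hED : ∀ t, ∫ ω, D t ω ∂P = 0 := by
    intro t
    have h1 := ite_integrable P _ (hmand _ _ (hms t i) (hms (t + 1) j))
    have h2 := ite_integrable P _ (hms t i)
    have e1 : ∫ ω, D t ω ∂P
        = (∫ ω, (if X t ω = i ∧ X (t + 1) ω = j then (1 : ℝ) else 0) ∂P)
          - ∫ ω, c * (if X t ω = i then (1 : ℝ) else 0) ∂P :=
      integral_sub h1 (h2.const_mul c)
    have e2 : ∫ ω, c * (if X t ω = i then (1 : ℝ) else 0) ∂P
        = c * ∫ ω, (if X t ω = i then (1 : ℝ) else 0) ∂P := integral_const_mul c _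
    have e3 : ∫ ω, (if X t ω = i ∧ X (t + 1) ω = j then (1 : ℝ) else 0) ∂P
        = (P {ω | X t ω = i ∧ X (t + 1) ω = j}).toReal :=
      integral_ite_eq P _ (hmand _ _ (hms t i) (hms (t + 1) j))
    have e4 : ∫ ω, (if X t ω = i then (1 : ℝ) else 0) ∂P
        = (P {ω | X t ω = i}).toReal := integral_ite_eq P _ (hms t i)
    rw [e1, e2, e3, e4, k2 t, toReal_mul_ofReal]
    ring
  have hEDD : ∀ s t, s < t → ∫ ω, D s ω * D t ω ∂P = 0 := by
    intro s t hst
    have hpt : (fun ω => D s ω * D t ω) = fun ω =>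
        ((if (X s ω = i ∧ X (s + 1) ω = j ∧ X t ω = i) ∧ X (t + 1) ω = j then (1 : ℝ) else 0)
          - c * (if X s ω = i ∧ X (s + 1) ω = j ∧ X t ω = i then (1 : ℝ) else 0))
        - c * ((if (X s ω = i ∧ X t ω = i) ∧ X (t + 1) ω = j then (1 : ℝ) else 0)
          - c * (if X s ω = i ∧ X t ω = i then (1 : ℝ) else 0)) := by
      funext ω
      simp only [hDdef]
      by_cases h1 : X s ω = i <;> by_cases h2 : X (s + 1) ω = j <;>
        by_cases h3 : X t ω = i <;> by_cases h4 : X (t + 1) ω = j <;>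
        simp [h1, h2, h3, h4] <;> ring
    have m1 : MeasurableSet {ω | (X s ω = i ∧ X (s + 1) ω = j ∧ X t ω = i) ∧ X (t + 1) ω = j} :=
      hmand _ _ (hmand _ _ (hms s i) (hmand _ _ (hms (s + 1) j) (hms t i))) (hms (t + 1) j)
    have m2 : MeasurableSet {ω | X s ω = i ∧ X (s + 1) ω = j ∧ X t ω = i} :=
      hmand _ _ (hms s i) (hmand _ _ (hms (s + 1) j) (hms t i))
    have m3 : MeasurableSet {ω | (X s ω = i ∧ X t ω = i) ∧ X (t + 1) ω = j} :=
      hmand _ _ (hmand _ _ (hms s i) (hms t i)) (hms (t + 1) j)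
    have m4 : MeasurableSet {ω | X s ω = i ∧ X t ω = i} :=
      hmand _ _ (hms s i) (hms t i)
    have i1 := ite_integrable P _ m1
    have i2 := ite_integrable P _ m2
    have i3 := ite_integrable P _ m3
    have i4 := ite_integrable P _ m4
    have e0 : ∫ ω, D s ω * D t ω ∂P = ∫ ω,
        (((if (X s ω = i ∧ X (s + 1) ω = j ∧ X t ω = i) ∧ X (t + 1) ω = j then (1 : ℝ) else 0)
          - c * (if X s ω = i ∧ X (s + 1) ω = j ∧ X t ω = i then (1 : ℝ) else 0))
        - c * ((if (X s ω = i ∧ X t ω = i) ∧ X (t + 1) ω = j then (1 : ℝ) else 0)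
          - c * (if X s ω = i ∧ X t ω = i then (1 : ℝ) else 0))) ∂P :=
      integral_congr_ae (Filter.Eventually.of_forall fun ω => congrFun hpt ω)
    have e1 : ∫ ω,
        (((if (X s ω = i ∧ X (s + 1) ω = j ∧ X t ω = i) ∧ X (t + 1) ω = j then (1 : ℝ) else 0)
          - c * (if X s ω = i ∧ X (s + 1) ω = j ∧ X t ω = i then (1 : ℝ) else 0))
        - c * ((if (X s ω = i ∧ X t ω = i) ∧ X (t + 1) ω = j then (1 : ℝ) else 0)
          - c * (if X s ω = i ∧ X t ω = i then (1 : ℝ) else 0))) ∂P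
        = (∫ ω,
            ((if (X s ω = i ∧ X (s + 1) ω = j ∧ X t ω = i) ∧ X (t + 1) ω = j then (1 : ℝ) else 0)
            - c * (if X s ω = i ∧ X (s + 1) ω = j ∧ X t ω = i then (1 : ℝ) else 0)) ∂P)
          - ∫ ω,
            (c * ((if (X s ω = i ∧ X t ω = i) ∧ X (t + 1) ω = j then (1 : ℝ) else 0)
            - c * (if X s ω = i ∧ X t ω = i then (1 : ℝ) else 0))) ∂P :=
      integral_sub (i1.sub (i2.const_mul c)) ((i3.sub (i4.const_mul c)).const_mul c)
    have e2 : ∫ ω,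
        ((if (X s ω = i ∧ X (s + 1) ω = j ∧ X t ω = i) ∧ X (t + 1) ω = j then (1 : ℝ) else 0)
          - c * (if X s ω = i ∧ X (s + 1) ω = j ∧ X t ω = i then (1 : ℝ) else 0)) ∂P
        = (∫ ω, (if (X s ω = i ∧ X (s + 1) ω = j ∧ X t ω = i) ∧ X (t + 1) ω = j
              then (1 : ℝ) else 0) ∂P)
          - ∫ ω, c * (if X s ω = i ∧ X (s + 1) ω = j ∧ X t ω = i then (1 : ℝ) else 0) ∂P :=
      integral_sub i1 (i2.const_mul c)
    have e3 : ∫ ω,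
        (c * ((if (X s ω = i ∧ X t ω = i) ∧ X (t + 1) ω = j then (1 : ℝ) else 0)
          - c * (if X s ω = i ∧ X t ω = i then (1 : ℝ) else 0))) ∂P
        = c * ∫ ω,
            ((if (X s ω = i ∧ X t ω = i) ∧ X (t + 1) ω = j then (1 : ℝ) else 0)
            - c * (if X s ω = i ∧ X t ω = i then (1 : ℝ) else 0)) ∂P :=
      integral_const_mul c _
    have e4 : ∫ ω,
        ((if (X s ω = i ∧ X t ω = i) ∧ X (t + 1) ω = j then (1 : ℝ) else 0)
          - c * (if X s ω = i ∧ X t ω = i then (1 : ℝ) else 0)) ∂P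
        = (∫ ω, (if (X s ω = i ∧ X t ω = i) ∧ X (t + 1) ω = j then (1 : ℝ) else 0) ∂P)
          - ∫ ω, c * (if X s ω = i ∧ X t ω = i then (1 : ℝ) else 0) ∂P :=
      integral_sub i3 (i4.const_mul c)
    have e5 : ∫ ω, c * (if X s ω = i ∧ X (s + 1) ω = j ∧ X t ω = i then (1 : ℝ) else 0) ∂P
        = c * ∫ ω, (if X s ω = i ∧ X (s + 1) ω = j ∧ X t ω = i then (1 : ℝ) else 0) ∂P :=
      integral_const_mul c _
    have e6 : ∫ ω, c * (if X s ω = i ∧ X t ω = i then (1 : ℝ) else 0) ∂P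
        = c * ∫ ω, (if X s ω = i ∧ X t ω = i then (1 : ℝ) else 0) ∂P :=
      integral_const_mul c _
    have f1 : ∫ ω, (if (X s ω = i ∧ X (s + 1) ω = j ∧ X t ω = i) ∧ X (t + 1) ω = j
          then (1 : ℝ) else 0) ∂P
        = (P {ω | (X s ω = i ∧ X (s + 1) ω = j ∧ X t ω = i) ∧ X (t + 1) ω = j}).toReal :=
      integral_ite_eq P _ m1
    have f2 : ∫ ω, (if X s ω = i ∧ X (s + 1) ω = j ∧ X t ω = i then (1 : ℝ) else 0) ∂P
        = (P {ω | X s ω = i ∧ X (s + 1) ω = j ∧ X t ω = i}).toReal :=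
      integral_ite_eq P _ m2
    have f3 : ∫ ω, (if (X s ω = i ∧ X t ω = i) ∧ X (t + 1) ω = j then (1 : ℝ) else 0) ∂P
        = (P {ω | (X s ω = i ∧ X t ω = i) ∧ X (t + 1) ω = j}).toReal :=
      integral_ite_eq P _ m3
    have f4 : ∫ ω, (if X s ω = i ∧ X t ω = i then (1 : ℝ) else 0) ∂P
        = (P {ω | X s ω = i ∧ X t ω = i}).toReal :=
      integral_ite_eq P _ m4
    rw [e0, e1, e2, e3, e4, e5, e6, f1, f2, f3, f4, k_ff s t hst, k_ef s t hst,
      toReal_mul_ofReal, toReal_mul_ofReal]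
    ring
  have hEDDne : ∀ s t, s ≠ t → ∫ ω, D s ω * D t ω ∂P = 0 := by
    intro s t hst
    rcases lt_or_gt_of_ne hst with h | h
    · exact hEDD s t h
    · have : (fun ω => D s ω * D t ω) = fun ω => D t ω * D s ω := by
        funext ω; ring
      rw [show (∫ ω, D s ω * D t ω ∂P) = ∫ ω, (fun ω => D s ω * D t ω) ω ∂P from rfl, this]
      exact hEDD t s h
  have hDDint : ∀ s t, Integrable (fun ω => D s ω * D t ω) P := by
    intro s t
    refine bdd_integrable P _ ((hDmeas s).mul (hDmeas t)) 1 ?_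
    intro ω
    rw [abs_mul]
    calc |D s ω| * |D t ω| ≤ 1 * 1 :=
      mul_le_mul (hDbd s ω) (hDbd t ω) (abs_nonneg _) zero_le_one
    _ = 1 := by ring
  -- second moment bound
  have hM2 : ∀ T : ℕ, ∫ ω, (∑ s ∈ Finset.range T, D s ω) * (∑ s ∈ Finset.range T, D s ω) ∂P
      ≤ (T : ℝ) := by
    intro T
    have expand : (fun ω => (∑ s ∈ Finset.range T, D s ω) * (∑ s ∈ Finset.range T, D s ω))
        = fun ω => ∑ s ∈ Finset.range T, ∑ t ∈ Finset.range T, D s ω * D t ω := by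
      funext ω
      rw [Finset.sum_mul_sum]
    rw [show (∫ ω, (∑ s ∈ Finset.range T, D s ω) * (∑ s ∈ Finset.range T, D s ω) ∂P)
        = ∫ ω, (fun ω => (∑ s ∈ Finset.range T, D s ω) * (∑ s ∈ Finset.range T, D s ω)) ω ∂P
        from rfl, expand]
    rw [integral_finset_sum _ (fun s _ => integrable_finset_sum _ (fun t _ => hDDint s t))]
    have step : ∀ s ∈ Finset.range T,
        ∫ ω, ∑ t ∈ Finset.range T, D s ω * D t ω ∂P ≤ 1 := by
      intro s hs
      rw [integral_finset_sum _ (fun t _ => hDDint s t)]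
      have hsingle : ∑ t ∈ Finset.range T, ∫ ω, D s ω * D t ω ∂P
          = ∫ ω, D s ω * D s ω ∂P := by
        refine Finset.sum_eq_single s (fun t _ hts => hEDDne s t (Ne.symm hts)) ?_
        intro hns; exact absurd hs hns
      rw [hsingle]
      have hb : ∀ ω, D s ω * D s ω ≤ 1 := by
        intro ω
        have h := hDbd s ω
        nlinarith [abs_nonneg (D s ω), sq_abs (D s ω)]
      calc ∫ ω, D s ω * D s ω ∂P ≤ ∫ _ω, (1 : ℝ) ∂P :=
            integral_mono (hDDint s s) (integrable_const 1) hb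
        _ = 1 := by simp
    calc ∑ s ∈ Finset.range T, ∫ ω, ∑ t ∈ Finset.range T, D s ω * D t ω ∂P
        ≤ ∑ _s ∈ Finset.range T, (1 : ℝ) := Finset.sum_le_sum step
      _ = T := by simp
  -- Chebyshev: the average of D tends to 0 in probability
  have hCheb : TendstoInProb P (fun T ω => (T : ℝ)⁻¹ * ∑ s ∈ Finset.range T, D s ω) 0 := by
    intro ε hε
    have hbound : ∀ T : ℕ, 1 ≤ T →
        P {ω | ε < |(T : ℝ)⁻¹ * ∑ s ∈ Finset.range T, D s ω - 0|}
          ≤ ENNReal.ofReal (1 / (T * ε ^ 2)) := by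
      intro T hT
      have hTpos : (0 : ℝ) < T := by exact_mod_cast hT
      have hsub : {ω | ε < |(T : ℝ)⁻¹ * ∑ s ∈ Finset.range T, D s ω - 0|}
          ⊆ {ω | ((T : ℝ) * ε) ^ 2
              ≤ (∑ s ∈ Finset.range T, D s ω) * (∑ s ∈ Finset.range T, D s ω)} := by
        intro ω hω
        simp only [Set.mem_setOf_eq, sub_zero] at hω ⊢
        set M := ∑ s ∈ Finset.range T, D s ω with hM
        have h1 : (T : ℝ) * ε < |M| := by
          rw [abs_mul, abs_inv, abs_of_pos hTpos] at hω
          have h := (mul_lt_mul_iff_right₀ hTpos).mpr hω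
          rwa [← mul_assoc, mul_inv_cancel₀ hTpos.ne', one_mul] at h
        have h2 : ((T : ℝ) * ε) ^ 2 ≤ |M| ^ 2 :=
          pow_le_pow_left₀ (by positivity) h1.le 2
        calc ((T : ℝ) * ε) ^ 2 ≤ |M| ^ 2 := h2
          _ = M * M := by rw [sq_abs]; ring
      have hMmeas : Measurable (fun ω => ∑ s ∈ Finset.range T, D s ω) :=
        Finset.measurable_sum _ (fun s _ => hDmeas s)
      have hMbd : ∀ ω, |∑ s ∈ Finset.range T, D s ω| ≤ (T : ℝ) := by
        intro ω
        calc |∑ s ∈ Finset.range T, D s ω| ≤ ∑ s ∈ Finset.range T, |D s ω| :=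
              Finset.abs_sum_le_sum_abs _ _
          _ ≤ ∑ _s ∈ Finset.range T, (1 : ℝ) := Finset.sum_le_sum fun s _ => hDbd s ω
          _ = T := by simp
      have hint : Integrable
          (fun ω => (∑ s ∈ Finset.range T, D s ω) * (∑ s ∈ Finset.range T, D s ω)) P := by
        refine bdd_integrable P _ (hMmeas.mul hMmeas) ((T : ℝ) * T) ?_
        intro ω
        rw [abs_mul]
        exact mul_le_mul (hMbd ω) (hMbd ω) (abs_nonneg _) hTpos.le
      have markov := mul_meas_ge_le_integral_of_nonneg
        (Filter.Eventually.of_forall fun ω =>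
          mul_self_nonneg (∑ s ∈ Finset.range T, D s ω)) hint (((T : ℝ) * ε) ^ 2)
      have ha : (0 : ℝ) < ((T : ℝ) * ε) ^ 2 := by positivity
      have hx : ((((T : ℝ) * ε) ^ 2) *
          (P {ω | ((T : ℝ) * ε) ^ 2
            ≤ (∑ s ∈ Finset.range T, D s ω) * (∑ s ∈ Finset.range T, D s ω)}).toReal) ≤ T :=
        le_trans markov (hM2 T)
      have hkey : (P {ω | ((T : ℝ) * ε) ^ 2
          ≤ (∑ s ∈ Finset.range T, D s ω) * (∑ s ∈ Finset.range T, D s ω)}).toReal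
          ≤ 1 / (T * ε ^ 2) := by
        rw [le_div_iff₀ (by positivity)]
        nlinarith [hx, ENNReal.toReal_nonneg (a := P {ω | ((T : ℝ) * ε) ^ 2
          ≤ (∑ s ∈ Finset.range T, D s ω) * (∑ s ∈ Finset.range T, D s ω)})]
      calc P {ω | ε < |(T : ℝ)⁻¹ * ∑ s ∈ Finset.range T, D s ω - 0|}
          ≤ P {ω | ((T : ℝ) * ε) ^ 2
              ≤ (∑ s ∈ Finset.range T, D s ω) * (∑ s ∈ Finset.range T, D s ω)} :=
            measure_mono hsub
        _ = ENNReal.ofReal ((P {ω | ((T : ℝ) * ε) ^ 2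
              ≤ (∑ s ∈ Finset.range T, D s ω) * (∑ s ∈ Finset.range T, D s ω)}).toReal) :=
            (ENNReal.ofReal_toReal (measure_ne_top P _)).symm
        _ ≤ ENNReal.ofReal (1 / (T * ε ^ 2)) := ENNReal.ofReal_le_ofReal hkey
    have hlim : Tendsto (fun T : ℕ => ENNReal.ofReal (1 / (T * ε ^ 2))) atTop (𝓝 0) := by
      rw [← ENNReal.ofReal_zero]
      apply ENNReal.tendsto_ofReal
      have h1 : Tendsto (fun T : ℕ => (T : ℝ) * ε ^ 2) atTop atTop :=
        Tendsto.atTop_mul_const (by positivity) tendsto_natCast_atTop_atTop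
      have h2 := h1.inv_tendsto_atTop
      have h3 : (fun T : ℕ => 1 / ((T : ℝ) * ε ^ 2)) = (fun T : ℕ => ((T : ℝ) * ε ^ 2))⁻¹ := by
        funext T; simp [one_div]
      rw [h3]; exact h2
    refine tendsto_of_tendsto_of_tendsto_of_le_of_le' tendsto_const_nhds hlim
      (Filter.Eventually.of_forall fun T => zero_le) ?_
    filter_upwards [Filter.eventually_ge_atTop 1] with T hT using hbound T hT
  -- combine
  intro ε hε
  have hdecomp : ∀ (T : ℕ) (ω : Ω),
      (T : ℝ)⁻¹ * (∑ s ∈ Finset.range T,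
          if X s ω = i ∧ X (s + 1) ω = j then (1 : ℝ) else 0) - π i * c
        = ((T : ℝ)⁻¹ * ∑ s ∈ Finset.range T, D s ω - 0)
          + c * ((T : ℝ)⁻¹ * (∑ s ∈ Finset.range T,
              if X s ω = i then (1 : ℝ) else 0) - π i) := by
    intro T ω
    have hsumeq : (∑ s ∈ Finset.range T, if X s ω = i ∧ X (s + 1) ω = j then (1 : ℝ) else 0)
        = ∑ s ∈ Finset.range T, D s ω
          + c * ∑ s ∈ Finset.range T, (if X s ω = i then (1 : ℝ) else 0) := by
      rw [Finset.mul_sum, ← Finset.sum_add_distrib]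
      refine Finset.sum_congr rfl fun s _ => ?_
      simp only [hDdef]
      ring
    rw [hsumeq]
    ring
  have hsubset : ∀ T : ℕ,
      {ω | ε < |(T : ℝ)⁻¹ * (∑ s ∈ Finset.range T,
          if X s ω = i ∧ X (s + 1) ω = j then (1 : ℝ) else 0) - π i * c|}
      ⊆ {ω | ε / 2 < |(T : ℝ)⁻¹ * ∑ s ∈ Finset.range T, D s ω - 0|}
        ∪ {ω | ε / 2 < |(T : ℝ)⁻¹ * (∑ s ∈ Finset.range T,
            if X s ω = i then (1 : ℝ) else 0) - π i|} := by
    intro T ω hω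
    simp only [Set.mem_setOf_eq, Set.mem_union] at hω ⊢
    by_contra h
    push_neg at h
    obtain ⟨h1, h2⟩ := h
    rw [hdecomp T ω] at hω
    have habs : |((T : ℝ)⁻¹ * ∑ s ∈ Finset.range T, D s ω - 0)
        + c * ((T : ℝ)⁻¹ * (∑ s ∈ Finset.range T,
            if X s ω = i then (1 : ℝ) else 0) - π i)| ≤ ε / 2 + ε / 2 := by
      calc |((T : ℝ)⁻¹ * ∑ s ∈ Finset.range T, D s ω - 0)
          + c * ((T : ℝ)⁻¹ * (∑ s ∈ Finset.range T,
              if X s ω = i then (1 : ℝ) else 0) - π i)|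
          ≤ |(T : ℝ)⁻¹ * ∑ s ∈ Finset.range T, D s ω - 0|
            + |c * ((T : ℝ)⁻¹ * (∑ s ∈ Finset.range T,
                if X s ω = i then (1 : ℝ) else 0) - π i)| := abs_add_le _ _
        _ = |(T : ℝ)⁻¹ * ∑ s ∈ Finset.range T, D s ω - 0|
            + c * |(T : ℝ)⁻¹ * (∑ s ∈ Finset.range T,
                if X s ω = i then (1 : ℝ) else 0) - π i| := by
            rw [abs_mul, abs_of_nonneg hc0]
        _ ≤ ε / 2 + 1 * (ε / 2) := by
            refine add_le_add h1 ?_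
            exact mul_le_mul hc1 h2 (abs_nonneg _) zero_le_one
        _ = ε / 2 + ε / 2 := by ring
    linarith
  have hA := hCheb (ε / 2) (by linarith)
  have hB := hLLN i (ε / 2) (by linarith)
  have hsum2 : Tendsto (fun T : ℕ =>
      P {ω | ε / 2 < |(T : ℝ)⁻¹ * ∑ s ∈ Finset.range T, D s ω - 0|}
      + P {ω | ε / 2 < |(T : ℝ)⁻¹ * (∑ s ∈ Finset.range T,
          if X s ω = i then (1 : ℝ) else 0) - π i|}) atTop (𝓝 0) := by
    simpa using hA.add hB
  refine tendsto_of_tendsto_of_tendsto_of_le_of_le' tendsto_const_nhds hsum2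
    (Filter.Eventually.of_forall fun T => zero_le)
    (Filter.Eventually.of_forall fun T =>
      le_trans (measure_mono (hsubset T)) (measure_union_le _ _))
end
end
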